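/- arXiv:1303.4244 — 5 statements merged into one kernel-verified Lean document; each statement's English description precedes it below -/
import Mathlib

section
/- Let 0 < p < 1 and q = 1 − p, and let f̃, g̃ : ℂ → ℂ be entire functions satisfying f̃(z) = f̃(pz) + f̃(qz) + g̃(z) for all z ∈ ℂ. Then f̃ is JS-admissible if and only if g̃ is JS-admissible. -/
open Filter Set

noncomputable section

/-- An entire function `f` is JS-admissible with parameters `(α, β)`. -/
def JSAdmissibleWith (f : ℂ → ℂ) (α β : ℝ) : Prop :=
  ∃ θ ∈ Set.Ioo (0 : ℝ) (Real.pi / 2), ∃ ε > (0 : ℝ), ∃ C > (0 : ℝ),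
    (∀ z : ℂ, 1 ≤ ‖z‖ → |Complex.arg z| ≤ θ →
      ‖f z‖ ≤ C * ‖z‖ ^ α * Real.log (1 + ‖z‖) ^ β) ∧
    (∀ z : ℂ, 1 ≤ ‖z‖ → θ ≤ |Complex.arg z| →
      ‖Complex.exp z * f z‖ ≤ C * Real.exp ((1 - ε) * ‖z‖))

/-- An entire function `f` is JS-admissible. -/
def JSAdmissible (f : ℂ → ℂ) : Prop := ∃ α β : ℝ, JSAdmissibleWith f α β

lemma re_le_cos {θ : ℝ} (hθ : 0 ≤ θ) (z : ℂ) (hz : θ ≤ |Complex.arg z|) :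
    z.re ≤ Real.cos θ * ‖z‖ := by
  rcases eq_or_ne z 0 with rfl | hz0
  · simp
  · have h1 : Real.cos z.arg = z.re / ‖z‖ := Complex.cos_arg hz0
    have habs : (0:ℝ) < ‖z‖ := by
      simpa [norm_pos_iff] using hz0
    have h2 : Real.cos z.arg = Real.cos |z.arg| := (Real.cos_abs z.arg).symm
    have h3 : Real.cos |z.arg| ≤ Real.cos θ :=
      Real.cos_le_cos_of_nonneg_of_le_pi hθ (Complex.abs_arg_le_pi z) hz
    have : z.re = Real.cos z.arg * ‖z‖ := by
      rw [h1]; field_simp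
    rw [this]
    have := h2 ▸ h3
    nlinarith [habs.le]

lemma abs_real_mul (r : ℝ) (hr : 0 < r) (z : ℂ) :
    ‖(r:ℂ) * z‖ = r * ‖z‖ := by
  rw [norm_mul, Complex.norm_real, Real.norm_eq_abs, abs_of_pos hr]

/-- pure power bound from power-log bound, for x ≥ 1 -/
lemma power_log_le (α β : ℝ) (x : ℝ) (hx : 1 ≤ x) :
    x ^ α * Real.log (1 + x) ^ β ≤ max 1 (Real.log 2 ^ β) * x ^ (|α| + max β 0) := by
  have hx0 : (0:ℝ) < x := lt_of_lt_of_le one_pos hx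
  have h1 : x ^ α ≤ x ^ |α| := Real.rpow_le_rpow_of_exponent_le hx (le_abs_self α)
  have hlogpos : (0:ℝ) < Real.log (1 + x) := by
    apply Real.log_pos; linarith
  rcases le_or_gt 0 β with hβ | hβ
  · have h2 : Real.log (1 + x) ≤ x := by
      have := Real.log_le_sub_one_of_pos (show (0:ℝ) < 1 + x by linarith)
      linarith
    have h3 : Real.log (1 + x) ^ β ≤ x ^ β := Real.rpow_le_rpow hlogpos.le h2 hβ
    have hmax : max β 0 = β := max_eq_left hβ
    rw [hmax, Real.rpow_add hx0]
    calc x ^ α * Real.log (1 + x) ^ β ≤ x ^ |α| * x ^ β := by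
          apply mul_le_mul h1 h3 (Real.rpow_nonneg hlogpos.le β) (Real.rpow_nonneg hx0.le _)
      _ ≤ max 1 (Real.log 2 ^ β) * (x ^ |α| * x ^ β) :=
          le_mul_of_one_le_left
            (mul_nonneg (Real.rpow_nonneg hx0.le _) (Real.rpow_nonneg hx0.le _))
            (le_max_left _ _)
  · have hlog2 : Real.log 2 ≤ Real.log (1 + x) := by
      apply Real.log_le_log (by norm_num); linarith
    have h3 : Real.log (1 + x) ^ β ≤ Real.log 2 ^ β :=
      Real.rpow_le_rpow_of_nonpos (Real.log_pos (by norm_num)) hlog2 hβ.le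
    have hmax : max β 0 = 0 := max_eq_right hβ.le
    rw [hmax, add_zero]
    calc x ^ α * Real.log (1 + x) ^ β ≤ x ^ |α| * Real.log 2 ^ β := by
          apply mul_le_mul h1 h3 (Real.rpow_nonneg hlogpos.le β) (Real.rpow_nonneg hx0.le _)
      _ = Real.log 2 ^ β * x ^ |α| := mul_comm _ _
      _ ≤ max 1 (Real.log 2 ^ β) * x ^ |α| := by
          apply mul_le_mul_of_nonneg_right (le_max_right _ _) (Real.rpow_nonneg hx0.le _)

lemma bound_on_ball (f : ℂ → ℂ) (hf : Continuous f) (R : ℝ) :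
    ∃ S : ℝ, 1 ≤ S ∧ ∀ w : ℂ, ‖w‖ ≤ R → ‖f w‖ ≤ S := by
  obtain ⟨S, hS⟩ := (isCompact_closedBall (0:ℂ) R).exists_bound_of_continuousOn
    hf.continuousOn
  refine ⟨max S 1, le_max_right _ _, fun w hw => ?_⟩
  have : w ∈ Metric.closedBall (0:ℂ) R := by
    simpa [Metric.mem_closedBall, Complex.dist_eq] using hw
  exact le_trans (hS w this) (le_max_left _ _)

lemma one_le_rpow' {x e : ℝ} (hx : 1 ≤ x) (he : 0 ≤ e) : 1 ≤ x ^ e := by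
  have := Real.rpow_le_rpow zero_le_one hx he
  simpa [Real.one_rpow] using this

lemma abs_sub_add_le' (a b c : ℂ) :
    ‖a - (b + c)‖ ≤ ‖a‖ + ‖b‖ + ‖c‖ := by
  have h1 := norm_sub_le a (b + c)
  have h2 := norm_add_le b c
  linarith

lemma abs_add_add_le' (a b c : ℂ) :
    ‖a + b + c‖ ≤ ‖a‖ + ‖b‖ + ‖c‖ := by
  have h1 := norm_add_le (a + b) c
  have h2 := norm_add_le a b
  linarith

set_option maxHeartbeats 1000000 in
lemma js_easy (p q : ℝ) (hp : 0 < p) (hp1 : p < 1) (hq : q = 1 - p)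
    (f g : ℂ → ℂ) (hf : Differentiable ℂ f)
    (hfe : ∀ z : ℂ, f z = f ((p : ℂ) * z) + f ((q : ℂ) * z) + g z)
    (h : JSAdmissible f) : JSAdmissible g := by
  obtain ⟨α, β, θ, hθ, ε, hε, C, hC, hI, hO⟩ := h
  have hq0 : 0 < q := by rw [hq]; linarith
  have hq1 : q < 1 := by rw [hq]; linarith
  have hθ0 : 0 < θ := hθ.1
  have hπ : 0 < Real.pi := Real.pi_pos
  set c := Real.cos θ with hcdef
  have hc0 : 0 < c := Real.cos_pos_of_mem_Ioo ⟨by linarith, hθ.2⟩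
  have hc1 : c < 1 := by
    have h3 : Real.cos θ < Real.cos 0 := by
      apply Real.cos_lt_cos_of_nonneg_of_le_pi le_rfl (by linarith [hθ.2]) hθ0
    simpa using h3
  set K := max 1 (Real.log 2 ^ β) with hKdef
  have hK1 : (1:ℝ) ≤ K := le_max_left _ _
  set α₂ := |α| + max β 0 with hα₂def
  have hα₂ : 0 ≤ α₂ := add_nonneg (abs_nonneg _) (le_max_right _ _)
  set C₂ := C * K with hC₂def
  have hC₂ : 0 < C₂ := mul_pos hC (lt_of_lt_of_le one_pos hK1)
  have hI' : ∀ z : ℂ, 1 ≤ ‖z‖ → |Complex.arg z| ≤ θ →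
      ‖f z‖ ≤ C₂ * ‖z‖ ^ α₂ := by
    intro z h1 h2
    calc ‖f z‖ ≤ C * ‖z‖ ^ α * Real.log (1 + ‖z‖) ^ β :=
          hI z h1 h2
      _ = C * (‖z‖ ^ α * Real.log (1 + ‖z‖) ^ β) := by ring
      _ ≤ C * (K * ‖z‖ ^ α₂) :=
          mul_le_mul_of_nonneg_left (power_log_le α β _ h1) hC.le
      _ = C₂ * ‖z‖ ^ α₂ := by ring
  obtain ⟨S, hS1, hS⟩ := bound_on_ball f hf.continuous 1
  set ε₃ := min (1 - c) ε with hε₃def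
  have hε₃0 : 0 < ε₃ := lt_min (by linarith) hε
  have hε₃c : ε₃ ≤ 1 - c := min_le_left _ _
  have hε₃ε : ε₃ ≤ ε := min_le_right _ _
  set C₃ := 3 * C₂ + 2 * S + 3 * C with hC₃def
  have hC₃ : 0 < C₃ := by positivity
  refine ⟨α₂, 0, θ, hθ, ε₃, hε₃0, C₃, hC₃, ?_, ?_⟩
  · -- cone bound for g
    intro z h1 h2
    rw [Real.rpow_zero, mul_one]
    have hzα : (1:ℝ) ≤ ‖z‖ ^ α₂ := one_le_rpow' h1 hα₂
    have key : ∀ r : ℝ, 0 < r → r < 1 →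
        ‖f ((r:ℂ) * z)‖ ≤ (C₂ + S) * ‖z‖ ^ α₂ := by
      intro r hr0 hr1
      have habs := abs_real_mul r hr0 z
      rcases le_or_gt 1 (r * ‖z‖) with hbig | hsmall
      · have harg : |Complex.arg ((r:ℂ) * z)| ≤ θ := by
          rw [Complex.arg_real_mul z hr0]; exact h2
        have := hI' ((r:ℂ) * z) (by rw [habs]; exact hbig) harg
        rw [habs, Real.mul_rpow hr0.le (norm_nonneg z)] at this
        have hr2 : r ^ α₂ ≤ 1 := Real.rpow_le_one hr0.le hr1.le hα₂
        calc ‖f ((r:ℂ) * z)‖ ≤ C₂ * (r ^ α₂ * ‖z‖ ^ α₂) := this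
          _ ≤ C₂ * (1 * ‖z‖ ^ α₂) := by
              apply mul_le_mul_of_nonneg_left _ hC₂.le
              apply mul_le_mul_of_nonneg_right hr2 (Real.rpow_nonneg (norm_nonneg z) _)
          _ ≤ (C₂ + S) * ‖z‖ ^ α₂ := by nlinarith
      · have := hS ((r:ℂ) * z) (by rw [habs]; linarith)
        calc ‖f ((r:ℂ) * z)‖ ≤ S := this
          _ ≤ S * ‖z‖ ^ α₂ := le_mul_of_one_le_right (by linarith) hzα
          _ ≤ (C₂ + S) * ‖z‖ ^ α₂ := by nlinarith
    have hdecomp : g z = f z - (f ((p:ℂ) * z) + f ((q:ℂ) * z)) := by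
      rw [hfe z]; ring
    calc ‖g z‖ = ‖f z - (f ((p:ℂ) * z) + f ((q:ℂ) * z))‖ := by
          rw [hdecomp]
      _ ≤ ‖f z‖ + ‖f ((p:ℂ) * z)‖ + ‖f ((q:ℂ) * z)‖ :=
          abs_sub_add_le' _ _ _
      _ ≤ C₂ * ‖z‖ ^ α₂ + (C₂ + S) * ‖z‖ ^ α₂
            + (C₂ + S) * ‖z‖ ^ α₂ := by
          have := hI' z h1 h2
          have := key p hp hp1
          have := key q hq0 hq1
          linarith
      _ ≤ C₃ * ‖z‖ ^ α₂ := by nlinarith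
  · -- sector bound for g
    intro z h1 h2
    have hre : z.re ≤ c * ‖z‖ := re_le_cos hθ0.le z h2
    have habs0 : (0:ℝ) ≤ ‖z‖ := norm_nonneg z
    have key : ∀ r : ℝ, 0 < r → r < 1 →
        ‖Complex.exp z * f ((r:ℂ) * z)‖ ≤ (C + S) * Real.exp ((1 - ε₃) * ‖z‖) := by
      intro r hr0 hr1
      have habs := abs_real_mul r hr0 z
      rcases le_or_gt 1 (r * ‖z‖) with hbig | hsmall
      · have harg : θ ≤ |Complex.arg ((r:ℂ) * z)| := by
          rw [Complex.arg_real_mul z hr0]; exact h2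
        have hO' := hO ((r:ℂ) * z) (by rw [habs]; exact hbig) harg
        rw [habs] at hO'
        have hsplit : Complex.exp z * f ((r:ℂ) * z)
            = Complex.exp ((↑(1 - r) : ℂ) * z) * (Complex.exp ((r:ℂ) * z) * f ((r:ℂ) * z)) := by
          rw [← mul_assoc, ← Complex.exp_add]
          congr 2
          push_cast; ring
        calc ‖Complex.exp z * f ((r:ℂ) * z)‖
            = Real.exp ((1 - r) * z.re) * ‖Complex.exp ((r:ℂ) * z) * f ((r:ℂ) * z)‖ := by
              rw [hsplit, norm_mul, Complex.norm_exp, Complex.re_ofReal_mul]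
          _ ≤ Real.exp ((1 - r) * z.re) * (C * Real.exp ((1 - ε) * (r * ‖z‖))) :=
              mul_le_mul_of_nonneg_left hO' (Real.exp_nonneg _)
          _ = C * Real.exp ((1 - r) * z.re + (1 - ε) * (r * ‖z‖)) := by
              rw [Real.exp_add]; ring
          _ ≤ C * Real.exp ((1 - ε₃) * ‖z‖) := by
              apply mul_le_mul_of_nonneg_left _ hC.le
              rw [Real.exp_le_exp]
              have h4 : (1 - r) * z.re ≤ (1 - r) * (c * ‖z‖) :=
                mul_le_mul_of_nonneg_left hre (by linarith)
              nlinarith [mul_nonneg (mul_nonneg (sub_nonneg.2 hr1.le)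
                  (sub_nonneg.2 (by linarith : ε₃ + c ≤ 1))) habs0,
                mul_nonneg (mul_nonneg hr0.le (sub_nonneg.2 hε₃ε)) habs0]
          _ ≤ (C + S) * Real.exp ((1 - ε₃) * ‖z‖) := by
              have := Real.exp_nonneg ((1 - ε₃) * ‖z‖)
              nlinarith
      · have hfs := hS ((r:ℂ) * z) (by rw [habs]; linarith)
        calc ‖Complex.exp z * f ((r:ℂ) * z)‖
            = Real.exp z.re * ‖f ((r:ℂ) * z)‖ := by
              rw [norm_mul, Complex.norm_exp]
          _ ≤ Real.exp ((1 - ε₃) * ‖z‖) * S := by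
              apply mul_le_mul _ hfs (norm_nonneg _) (Real.exp_nonneg _)
              rw [Real.exp_le_exp]
              have h5 : c * ‖z‖ ≤ (1 - ε₃) * ‖z‖ :=
                mul_le_mul_of_nonneg_right (by linarith) habs0
              linarith
          _ ≤ (C + S) * Real.exp ((1 - ε₃) * ‖z‖) := by
              have := Real.exp_nonneg ((1 - ε₃) * ‖z‖)
              nlinarith
    have hdecomp : Complex.exp z * g z = Complex.exp z * f z
        - (Complex.exp z * f ((p:ℂ) * z) + Complex.exp z * f ((q:ℂ) * z)) := by
      rw [hfe z]; ring
    have hfz : ‖Complex.exp z * f z‖ ≤ C * Real.exp ((1 - ε) * ‖z‖) :=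
      hO z h1 h2
    have hmono : Real.exp ((1 - ε) * ‖z‖) ≤ Real.exp ((1 - ε₃) * ‖z‖) := by
      rw [Real.exp_le_exp]; nlinarith
    calc ‖Complex.exp z * g z‖
        ≤ ‖Complex.exp z * f z‖ + ‖Complex.exp z * f ((p:ℂ) * z)‖
          + ‖Complex.exp z * f ((q:ℂ) * z)‖ := by
          rw [hdecomp]; exact abs_sub_add_le' _ _ _
      _ ≤ C * Real.exp ((1 - ε₃) * ‖z‖)
          + (C + S) * Real.exp ((1 - ε₃) * ‖z‖)
          + (C + S) * Real.exp ((1 - ε₃) * ‖z‖) := by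
          have := key p hp hp1
          have := key q hq0 hq1
          have := hfz.trans (mul_le_mul_of_nonneg_left hmono hC.le)
          linarith
      _ ≤ C₃ * Real.exp ((1 - ε₃) * ‖z‖) := by
          have := Real.exp_nonneg ((1 - ε₃) * ‖z‖)
          nlinarith

set_option maxHeartbeats 1000000 in
lemma js_hard (p q : ℝ) (hp : 0 < p) (hp1 : p < 1) (hq : q = 1 - p)
    (f g : ℂ → ℂ) (hf : Differentiable ℂ f)
    (hfe : ∀ z : ℂ, f z = f ((p : ℂ) * z) + f ((q : ℂ) * z) + g z)
    (h : JSAdmissible g) : JSAdmissible f := by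
  obtain ⟨α, β, θ, hθ, ε, hε, C, hC, hI, hO⟩ := h
  have hq0 : 0 < q := by rw [hq]; linarith
  have hq1 : q < 1 := by rw [hq]; linarith
  have hθ0 : 0 < θ := hθ.1
  have hπ : 0 < Real.pi := Real.pi_pos
  set c := Real.cos θ with hcdef
  have hc0 : 0 < c := Real.cos_pos_of_mem_Ioo ⟨by linarith, hθ.2⟩
  have hc1 : c < 1 := by
    have h3 : Real.cos θ < Real.cos 0 := by
      apply Real.cos_lt_cos_of_nonneg_of_le_pi le_rfl (by linarith [hθ.2]) hθ0
    simpa using h3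
  -- scaling constants
  set m := min p q with hmdef
  set M := max p q with hMdef
  have hm0 : 0 < m := lt_min hp hq0
  have hM0 : 0 < M := lt_of_lt_of_le hp (le_max_left _ _)
  have hM1 : M < 1 := max_lt hp1 hq1
  have hmp : m ≤ p := min_le_left _ _
  have hmq : m ≤ q := min_le_right _ _
  have hMp : p ≤ M := le_max_left _ _
  have hMq : q ≤ M := le_max_right _ _
  have hm1 : m < 1 := lt_of_le_of_lt (hmp.trans hMp) hM1
  -- pure power bound for g
  set K := max 1 (Real.log 2 ^ β) with hKdef
  have hK1 : (1:ℝ) ≤ K := le_max_left _ _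
  set α₂ := |α| + max β 0 with hα₂def
  have hα₂ : 0 ≤ α₂ := add_nonneg (abs_nonneg _) (le_max_right _ _)
  set C₂ := C * K with hC₂def
  have hC₂ : 0 < C₂ := mul_pos hC (lt_of_lt_of_le one_pos hK1)
  have hI' : ∀ z : ℂ, 1 ≤ ‖z‖ → |Complex.arg z| ≤ θ →
      ‖g z‖ ≤ C₂ * ‖z‖ ^ α₂ := by
    intro z h1 h2
    calc ‖g z‖ ≤ C * ‖z‖ ^ α * Real.log (1 + ‖z‖) ^ β :=
          hI z h1 h2
      _ = C * (‖z‖ ^ α * Real.log (1 + ‖z‖) ^ β) := by ring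
      _ ≤ C * (K * ‖z‖ ^ α₂) :=
          mul_le_mul_of_nonneg_left (power_log_le α β _ h1) hC.le
      _ = C₂ * ‖z‖ ^ α₂ := by ring
  -- the exponent α'
  obtain ⟨n₀, hn₀⟩ := exists_pow_lt_of_lt_one (show (0:ℝ) < 1/4 by norm_num) hM1
  set α' := max α₂ (n₀ : ℝ) with hα'def
  have hα' : 0 ≤ α' := le_trans hα₂ (le_max_left _ _)
  have hα₂α' : α₂ ≤ α' := le_max_left _ _
  have hpow : ∀ r : ℝ, 0 < r → r ≤ M → r ^ α' ≤ 1/4 := by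
    intro r hr hrM
    calc r ^ α' ≤ M ^ α' := Real.rpow_le_rpow hr.le hrM hα'
      _ ≤ M ^ (n₀ : ℝ) := Real.rpow_le_rpow_of_exponent_ge hM0 hM1.le (le_max_right _ _)
      _ = M ^ n₀ := Real.rpow_natCast M n₀
      _ ≤ 1/4 := hn₀.le
  -- the epsilon and radius
  set ε₁ := min ε ((1 - c)/2) with hε₁def
  have hε₁0 : 0 < ε₁ := lt_min hε (by linarith)
  have hε₁ε : ε₁ ≤ ε := min_le_left _ _
  have hε₁c : ε₁ ≤ (1 - c)/2 := min_le_right _ _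
  set δ₀ := 1 - ε₁ - c with hδ₀def
  have hδ₀ : 0 < δ₀ := by simp only [hδ₀def]; linarith
  set δ₁ := (1 - M) * δ₀ with hδ₁def
  have hδ₁ : 0 < δ₁ := mul_pos (by linarith) hδ₀
  set R := max (1/m) (Real.log 4 / δ₁) with hRdef
  have hRm : 1/m ≤ R := le_max_left _ _
  have hR1 : 1 ≤ R := le_trans (by rw [le_div_iff₀ hm0]; linarith) hRm
  have hR0 : 0 < R := lt_of_lt_of_le one_pos hR1
  have hmR : 1 ≤ m * R := by
    calc (1:ℝ) = m * (1/m) := by field_simp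
      _ ≤ m * R := mul_le_mul_of_nonneg_left hRm hm0.le
  have hRexp : Real.exp (-(δ₁ * R)) ≤ 1/4 := by
    have h4 : Real.log 4 ≤ δ₁ * R := by
      calc Real.log 4 = δ₁ * (Real.log 4 / δ₁) := by field_simp
        _ ≤ δ₁ * R := mul_le_mul_of_nonneg_left (le_max_right _ _) hδ₁.le
    calc Real.exp (-(δ₁ * R)) ≤ Real.exp (-(Real.log 4)) := by
          rw [Real.exp_le_exp]; linarith
      _ = 1/4 := by rw [Real.exp_neg, Real.exp_log (by norm_num : (0:ℝ) < 4)]; norm_num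
  -- bound on a ball
  obtain ⟨S, hS1, hS⟩ := bound_on_ball f hf.continuous R
  set B := S + 2 * C₂ + 2 * C with hBdef
  have hB : 0 < B := by positivity
  have hSB : S ≤ B := by rw [hBdef]; linarith only [hC₂, hC]
  have hC₂B : C₂ ≤ B/2 := by rw [hBdef]; linarith only [hS1, hC]
  have hCB : C ≤ B/2 := by rw [hBdef]; linarith only [hS1, hC₂]
  clear_value c m M K α₂ C₂ α' ε₁ δ₀ δ₁ R B
  -- scaled point facts
  have hscale : ∀ r : ℝ, 0 < r → m ≤ r → r ≤ M → ∀ z : ℂ, R < ‖z‖ →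
      1 ≤ ‖(r:ℂ) * z‖ := by
    intro r hr hmr hrM z hz
    rw [abs_real_mul r hr z]
    calc (1:ℝ) ≤ m * R := hmR
      _ ≤ r * ‖z‖ := by
          apply mul_le_mul hmr hz.le hR0.le hr.le
  have hscale2 : ∀ (n : ℕ) (r : ℝ), 0 < r → r ≤ M → ∀ z : ℂ,
      ‖z‖ ≤ R * M⁻¹ ^ (n+1) → ‖(r:ℂ) * z‖ ≤ R * M⁻¹ ^ n := by
    intro n r hr hrM z hz
    rw [abs_real_mul r hr z]
    have hMne : M ≠ 0 := ne_of_gt hM0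
    calc r * ‖z‖ ≤ M * ‖z‖ :=
          mul_le_mul_of_nonneg_right hrM (norm_nonneg z)
      _ ≤ M * (R * M⁻¹ ^ (n+1)) := mul_le_mul_of_nonneg_left hz hM0.le
      _ = R * M⁻¹ ^ n := by
          rw [pow_succ]; field_simp
  -- CONE INDUCTION
  have hbase1 : ∀ z : ℂ, 1 ≤ ‖z‖ → ‖z‖ ≤ R →
      ‖f z‖ ≤ B * ‖z‖ ^ α' := by
    intro z h1 h3
    have h4 : ‖f z‖ ≤ S := hS z h3
    have h5 : (1:ℝ) ≤ ‖z‖ ^ α' := one_le_rpow' h1 hα'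
    calc ‖f z‖ ≤ S := h4
      _ ≤ B := hSB
      _ ≤ B * ‖z‖ ^ α' := le_mul_of_one_le_right hB.le h5
  have claim1 : ∀ n : ℕ, ∀ z : ℂ, 1 ≤ ‖z‖ → |Complex.arg z| ≤ θ →
      ‖z‖ ≤ R * M⁻¹ ^ n → ‖f z‖ ≤ B * ‖z‖ ^ α' := by
    intro n
    induction n with
    | zero =>
        intro z h1 h2 h3
        exact hbase1 z h1 (by simpa using h3)
    | succ n ih =>
        intro z h1 h2 h3
        rcases le_or_gt (‖z‖) R with hsm | hlg
        · exact hbase1 z h1 hsm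
        · have key : ∀ r : ℝ, 0 < r → m ≤ r → r ≤ M →
              ‖f ((r:ℂ) * z)‖ ≤ B * (r ^ α' * ‖z‖ ^ α') := by
            intro r hr hmr hrM
            have h1' := hscale r hr hmr hrM z hlg
            have h2' : |Complex.arg ((r:ℂ) * z)| ≤ θ := by
              rw [Complex.arg_real_mul z hr]; exact h2
            have h3' := hscale2 n r hr hrM z h3
            have := ih ((r:ℂ) * z) h1' h2' h3'
            rwa [abs_real_mul r hr z,
              Real.mul_rpow hr.le (norm_nonneg z)] at this
          have hpz := key p hp hmp hMp
          have hqz := key q hq0 hmq hMq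
          have hgz : ‖g z‖ ≤ C₂ * ‖z‖ ^ α' := by
            calc ‖g z‖ ≤ C₂ * ‖z‖ ^ α₂ := hI' z h1 h2
              _ ≤ C₂ * ‖z‖ ^ α' := by
                  apply mul_le_mul_of_nonneg_left
                    (Real.rpow_le_rpow_of_exponent_le h1 hα₂α') hC₂.le
          have htri : ‖f z‖ ≤ ‖f ((p:ℂ) * z)‖
              + ‖f ((q:ℂ) * z)‖ + ‖g z‖ := by
            rw [hfe z]; exact abs_add_add_le' _ _ _
          have hX0 : (0:ℝ) ≤ ‖z‖ ^ α' :=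
            Real.rpow_nonneg (norm_nonneg z) _
          have hpα := hpow p hp hMp
          have hqα := hpow q hq0 hMq
          have hsum : B * p ^ α' + B * q ^ α' + C₂ ≤ B := by
            have e1 : B * p ^ α' ≤ B * (1/4) := mul_le_mul_of_nonneg_left hpα hB.le
            have e2 : B * q ^ α' ≤ B * (1/4) := mul_le_mul_of_nonneg_left hqα hB.le
            linarith only [e1, e2, hC₂B]
          calc ‖f z‖
              ≤ B * (p ^ α' * ‖z‖ ^ α') + B * (q ^ α' * ‖z‖ ^ α')
                + C₂ * ‖z‖ ^ α' := by linarith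
            _ = (B * p ^ α' + B * q ^ α' + C₂) * ‖z‖ ^ α' := by ring
            _ ≤ B * ‖z‖ ^ α' := mul_le_mul_of_nonneg_right hsum hX0
  -- SECTOR INDUCTION
  have hbase2 : ∀ z : ℂ, 1 ≤ ‖z‖ → θ ≤ |Complex.arg z| → ‖z‖ ≤ R →
      ‖Complex.exp z * f z‖ ≤ B * Real.exp ((1 - ε₁) * ‖z‖) := by
    intro z h1 h2 h3
    have hre : z.re ≤ c * ‖z‖ := hcdef ▸ re_le_cos hθ0.le z h2
    have habs0 : (0:ℝ) ≤ ‖z‖ := norm_nonneg z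
    have h4 : ‖f z‖ ≤ S := hS z h3
    have h5 : Real.exp z.re ≤ Real.exp ((1 - ε₁) * ‖z‖) := by
      rw [Real.exp_le_exp]
      have h6 : c * ‖z‖ ≤ (1 - ε₁) * ‖z‖ :=
        mul_le_mul_of_nonneg_right (by simp only [hδ₀def] at hδ₀; linarith) habs0
      linarith
    calc ‖Complex.exp z * f z‖ = Real.exp z.re * ‖f z‖ := by
          rw [norm_mul, Complex.norm_exp]
      _ ≤ Real.exp ((1 - ε₁) * ‖z‖) * S :=
          mul_le_mul h5 h4 (norm_nonneg _) (Real.exp_nonneg _)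
      _ = S * Real.exp ((1 - ε₁) * ‖z‖) := mul_comm _ _
      _ ≤ B * Real.exp ((1 - ε₁) * ‖z‖) :=
          mul_le_mul_of_nonneg_right hSB (Real.exp_nonneg _)
  have claim2 : ∀ n : ℕ, ∀ z : ℂ, 1 ≤ ‖z‖ → θ ≤ |Complex.arg z| →
      ‖z‖ ≤ R * M⁻¹ ^ n →
      ‖Complex.exp z * f z‖ ≤ B * Real.exp ((1 - ε₁) * ‖z‖) := by
    intro n
    induction n with
    | zero =>
        intro z h1 h2 h3
        exact hbase2 z h1 h2 (by simpa using h3)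
    | succ n ih =>
        intro z h1 h2 h3
        rcases le_or_gt (‖z‖) R with hsm | hlg
        · exact hbase2 z h1 h2 hsm
        · have hre : z.re ≤ c * ‖z‖ := hcdef ▸ re_le_cos hθ0.le z h2
          have habs0 : (0:ℝ) ≤ ‖z‖ := norm_nonneg z
          have key : ∀ r : ℝ, 0 < r → m ≤ r → r ≤ M →
              ‖Complex.exp z * f ((r:ℂ) * z)‖
                ≤ (B/4) * Real.exp ((1 - ε₁) * ‖z‖) := by
            intro r hr hmr hrM
            have h1' := hscale r hr hmr hrM z hlg
            have h2' : θ ≤ |Complex.arg ((r:ℂ) * z)| := by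
              rw [Complex.arg_real_mul z hr]; exact h2
            have h3' := hscale2 n r hr hrM z h3
            have hih := ih ((r:ℂ) * z) h1' h2' h3'
            rw [abs_real_mul r hr z] at hih
            have hsplit : Complex.exp z * f ((r:ℂ) * z)
                = Complex.exp ((↑(1 - r) : ℂ) * z)
                  * (Complex.exp ((r:ℂ) * z) * f ((r:ℂ) * z)) := by
              rw [← mul_assoc, ← Complex.exp_add]
              congr 2
              push_cast; ring
            have hexpo : (1 - r) * z.re + (1 - ε₁) * (r * ‖z‖)
                ≤ (1 - ε₁) * ‖z‖ + (-(δ₁ * R)) := by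
              have h4 : (1 - r) * z.re ≤ (1 - r) * (c * ‖z‖) :=
                mul_le_mul_of_nonneg_left hre (by linarith)
              have h5 : δ₁ * R ≤ ((1 - r) * δ₀) * ‖z‖ := by
                apply mul_le_mul _ _ hR0.le _
                · simp only [hδ₁def]
                  apply mul_le_mul_of_nonneg_right (by linarith) hδ₀.le
                · linarith only [hlg]
                · exact mul_nonneg (by linarith only [hrM, hM1]) hδ₀.le
              have h6 : (1 - r) * (c * ‖z‖) + (1 - ε₁) * (r * ‖z‖)
                  = (1 - ε₁) * ‖z‖ - ((1 - r) * δ₀) * ‖z‖ := by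
                simp only [hδ₀def]; ring
              linarith
            calc ‖Complex.exp z * f ((r:ℂ) * z)‖
                = Real.exp ((1 - r) * z.re)
                  * ‖Complex.exp ((r:ℂ) * z) * f ((r:ℂ) * z)‖ := by
                  rw [hsplit, norm_mul, Complex.norm_exp, Complex.re_ofReal_mul]
              _ ≤ Real.exp ((1 - r) * z.re) * (B * Real.exp ((1 - ε₁) * (r * ‖z‖))) :=
                  mul_le_mul_of_nonneg_left hih (Real.exp_nonneg _)
              _ = B * Real.exp ((1 - r) * z.re + (1 - ε₁) * (r * ‖z‖)) := by
                  rw [Real.exp_add]; ring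
              _ ≤ B * Real.exp ((1 - ε₁) * ‖z‖ + (-(δ₁ * R))) := by
                  apply mul_le_mul_of_nonneg_left _ hB.le
                  rw [Real.exp_le_exp]; exact hexpo
              _ = B * Real.exp (-(δ₁ * R)) * Real.exp ((1 - ε₁) * ‖z‖) := by
                  rw [Real.exp_add]; ring
              _ ≤ (B/4) * Real.exp ((1 - ε₁) * ‖z‖) := by
                  apply mul_le_mul_of_nonneg_right _ (Real.exp_nonneg _)
                  have := mul_le_mul_of_nonneg_left hRexp hB.le
                  linarith only [this]
          have hgz : ‖Complex.exp z * g z‖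
              ≤ (B/2) * Real.exp ((1 - ε₁) * ‖z‖) := by
            have h4 := hO z h1 h2
            have h5 : Real.exp ((1 - ε) * ‖z‖)
                ≤ Real.exp ((1 - ε₁) * ‖z‖) := by
              rw [Real.exp_le_exp]
              apply mul_le_mul_of_nonneg_right (by linarith) habs0
            calc ‖Complex.exp z * g z‖ ≤ C * Real.exp ((1 - ε) * ‖z‖) := h4
              _ ≤ C * Real.exp ((1 - ε₁) * ‖z‖) :=
                  mul_le_mul_of_nonneg_left h5 hC.le
              _ ≤ (B/2) * Real.exp ((1 - ε₁) * ‖z‖) :=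
                  mul_le_mul_of_nonneg_right hCB (Real.exp_nonneg _)
          have htri : ‖Complex.exp z * f z‖
              ≤ ‖Complex.exp z * f ((p:ℂ) * z)‖
                + ‖Complex.exp z * f ((q:ℂ) * z)‖
                + ‖Complex.exp z * g z‖ := by
            have hd : Complex.exp z * f z = Complex.exp z * f ((p:ℂ) * z)
                + Complex.exp z * f ((q:ℂ) * z) + Complex.exp z * g z := by
              rw [hfe z]; ring
            rw [hd]; exact abs_add_add_le' _ _ _
          have hpz := key p hp hmp hMp
          have hqz := key q hq0 hmq hMq
          calc ‖Complex.exp z * f z‖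
              ≤ (B/4) * Real.exp ((1 - ε₁) * ‖z‖)
                + (B/4) * Real.exp ((1 - ε₁) * ‖z‖)
                + (B/2) * Real.exp ((1 - ε₁) * ‖z‖) := by linarith
            _ = B * Real.exp ((1 - ε₁) * ‖z‖) := by ring
  -- conclude
  have hKgt : (1:ℝ) < M⁻¹ := (one_lt_inv₀ hM0).2 hM1
  refine ⟨α', 0, θ, hθ, ε₁, hε₁0, B, hB, ?_, ?_⟩
  · intro z h1 h2
    rw [Real.rpow_zero, mul_one]
    obtain ⟨n, hn⟩ := pow_unbounded_of_one_lt (‖z‖ / R) hKgt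
    apply claim1 n z h1 h2
    rw [div_lt_iff₀ hR0] at hn
    rw [mul_comm]
    exact hn.le
  · intro z h1 h2
    obtain ⟨n, hn⟩ := pow_unbounded_of_one_lt (‖z‖ / R) hKgt
    apply claim2 n z h1 h2
    rw [div_lt_iff₀ hR0] at hn
    rw [mul_comm]
    exact hn.le

/-- for entire `f`, `g` satisfying the trie functional equation
`f(z) = f(pz) + f(qz) + g(z)`, `f` is JS-admissible iff `g` is. -/
theorem js_admissible_transfer (p q : ℝ) (hp : 0 < p) (hp1 : p < 1) (hq : q = 1 - p)
    (f g : ℂ → ℂ) (hf : Differentiable ℂ f) (hg : Differentiable ℂ g)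
    (hfe : ∀ z : ℂ, f z = f ((p : ℂ) * z) + f ((q : ℂ) * z) + g z) :
    JSAdmissible f ↔ JSAdmissible g :=
  ⟨js_easy p q hp hp1 hq f g hf hfe, js_hard p q hp hp1 hq f g hf hfe⟩

end
end

section
/- Let 0 < p < 1, q = 1 − p, α ∈ ℝ, β ≥ 0 and C ≥ 0. Suppose K : (0, ∞) → [0, ∞) is bounded on (0, 1] and satisfies K(r) ≤ K(pr) + K(qr) + C·(r^α·(log(1+r))^β + 1) for all r ≥ 1. Then, as r → ∞: K(r) = O(r) if α < 1; K(r) = O(r·(log r)^{β+1}) if α = 1; and K(r) = O(r^α·(log r)^β) if α > 1. -/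
open Filter Set Asymptotics

noncomputable section

/-- Boundedness of K on every interval (0, T]. -/
lemma majorant_bddAux (p q α β C : ℝ) (hp : 0 < p) (hp1 : p < 1) (hq0 : 0 < q) (hq1 : q < 1)
    (hβ : 0 ≤ β) (hC : 0 ≤ C) (K : ℝ → ℝ)
    (hKbdd : ∃ M : ℝ, ∀ r ∈ Set.Ioc (0 : ℝ) 1, K r ≤ M)
    (hrec : ∀ r : ℝ, 1 ≤ r →
      K r ≤ K (p * r) + K (q * r) + C * (r ^ α * Real.log (1 + r) ^ β + 1)) :
    ∀ T : ℝ, ∃ M : ℝ, 0 ≤ M ∧ ∀ r ∈ Set.Ioc (0 : ℝ) T, K r ≤ M := by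
  obtain ⟨M₀, hM₀⟩ := hKbdd
  set m : ℝ := max p q with hm
  have hm0 : 0 < m := lt_of_lt_of_le hp (le_max_left _ _)
  have hm1 : m < 1 := max_lt hp1 hq1
  have h1m : 1 < 1/m := (one_lt_one_div hm0 hm1)
  have key : ∀ n : ℕ, ∃ M : ℝ, 0 ≤ M ∧ ∀ r ∈ Set.Ioc (0:ℝ) ((1/m)^n), K r ≤ M := by
    intro n
    induction n with
    | zero =>
      refine ⟨max M₀ 0, le_max_right _ _, fun r hr => ?_⟩
      exact (hM₀ r (by simpa using hr)).trans (le_max_left _ _)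
    | succ n ih =>
      obtain ⟨Mn, hMn0, hMn⟩ := ih
      set T : ℝ := (1/m)^(n+1) with hT
      have hT1 : (1:ℝ) ≤ T := one_le_pow₀ h1m.le
      have hTn1 : (1:ℝ) ≤ (1/m)^n := one_le_pow₀ h1m.le
      have hlogT : 0 ≤ Real.log (1+T) ^ β :=
        Real.rpow_nonneg (Real.log_nonneg (by linarith)) _
      have hmaxT : (0:ℝ) ≤ max (T^α) 1 := le_max_of_le_right zero_le_one
      have hGnn : 0 ≤ C*((max (T^α) 1) * Real.log (1+T) ^ β + 1) :=
        mul_nonneg hC (by nlinarith [mul_nonneg hmaxT hlogT])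
      refine ⟨2*Mn + C*((max (T^α) 1) * Real.log (1+T) ^ β + 1), by linarith, ?_⟩
      intro r hr
      by_cases hcase : r ≤ (1/m)^n
      · have h1 := hMn r ⟨hr.1, hcase⟩
        linarith
      · push_neg at hcase
        have hr1 : 1 ≤ r := le_trans hTn1 hcase.le
        have hr0 : 0 < r := lt_of_lt_of_le one_pos hr1
        have hrT : r ≤ T := hr.2
        have hsub : ∀ c : ℝ, 0 < c → c ≤ m → K (c * r) ≤ Mn := by
          intro c hc hcm
          apply hMn
          constructor
          · positivity
          · calc c * r ≤ m * r := by nlinarith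
              _ ≤ m * T := by nlinarith
              _ = (1/m)^n := by
                  rw [hT, pow_succ]
                  field_simp
        have hKp : K (p * r) ≤ Mn := hsub p hp (le_max_left _ _)
        have hKq : K (q * r) ≤ Mn := hsub q hq0 (le_max_right _ _)
        have hg : r ^ α * Real.log (1+r) ^ β ≤ (max (T^α) 1) * Real.log (1+T) ^ β := by
          have hlog : Real.log (1+r) ^ β ≤ Real.log (1+T) ^ β := by
            apply Real.rpow_le_rpow (Real.log_nonneg (by linarith)) _ hβ
            exact Real.log_le_log (by linarith) (by linarith)
          have hra : r ^ α ≤ max (T^α) 1 := by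
            rcases le_or_gt 0 α with hα | hα
            · exact le_max_of_le_left (Real.rpow_le_rpow (le_of_lt hr0) hrT hα)
            · exact le_max_of_le_right (Real.rpow_le_one_of_one_le_of_nonpos hr1 hα.le)
          have h1 : 0 ≤ r ^ α := Real.rpow_nonneg hr0.le _
          have h2 : 0 ≤ Real.log (1+r) ^ β := Real.rpow_nonneg (Real.log_nonneg (by linarith)) _
          have h3 : 0 ≤ max (T^α) 1 := le_max_of_le_right zero_le_one
          calc r ^ α * Real.log (1+r) ^ β ≤ r ^ α * Real.log (1+T) ^ β :=
                mul_le_mul_of_nonneg_left hlog h1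
            _ ≤ (max (T^α) 1) * Real.log (1+T) ^ β :=
                mul_le_mul_of_nonneg_right hra (le_trans h2 hlog)
        have := hrec r hr1
        have hgC : C * (r ^ α * Real.log (1+r) ^ β + 1)
            ≤ C * ((max (T^α) 1) * Real.log (1+T) ^ β + 1) :=
          mul_le_mul_of_nonneg_left (by linarith) hC
        linarith
  intro T
  obtain ⟨n, hn⟩ := pow_unbounded_of_one_lt T h1m
  obtain ⟨M, hM0, hM⟩ := key n
  exact ⟨M, hM0, fun r hr => hM r ⟨hr.1, le_trans hr.2 hn.le⟩⟩

/-- The key induction: transfer the absorption inequality into a global bound. -/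
lemma majorant_keyAux (p q α β C : ℝ) (hp : 0 < p) (hq0 : 0 < q) (hp1 : p < 1) (hq1 : q < 1)
    (K ψ : ℝ → ℝ)
    (hrec : ∀ r : ℝ, 1 ≤ r →
      K r ≤ K (p * r) + K (q * r) + C * (r ^ α * Real.log (1 + r) ^ β + 1))
    (r₀ A M' : ℝ) (hr₀ : 1 ≤ r₀)
    (hM' : ∀ r ∈ Set.Ioc (0:ℝ) r₀, K r ≤ M')
    (hψ : ∀ r : ℝ, 0 < r → 0 ≤ A * ψ r)
    (habs : ∀ r : ℝ, r₀ < r →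
      A * ψ (p*r) + A * ψ (q*r) + C * (r ^ α * Real.log (1+r) ^ β + 1) + M' ≤ A * ψ r) :
    ∀ r : ℝ, 0 < r → K r ≤ M' + A * ψ r := by
  set m : ℝ := max p q with hm
  have hm0 : 0 < m := lt_of_lt_of_le hp (le_max_left _ _)
  have hm1 : m < 1 := max_lt hp1 hq1
  have h1m : 1 < 1/m := (one_lt_one_div hm0 hm1)
  have hr₀0 : 0 < r₀ := lt_of_lt_of_le one_pos hr₀
  have key : ∀ n : ℕ, ∀ r : ℝ, 0 < r → r ≤ r₀ * (1/m)^n → K r ≤ M' + A * ψ r := by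
    intro n
    induction n with
    | zero =>
      intro r hr0 hrle
      simp only [pow_zero, mul_one] at hrle
      exact le_add_of_le_of_nonneg (hM' r ⟨hr0, hrle⟩) (hψ r hr0)
    | succ n ih =>
      intro r hr0 hrle
      by_cases hcase : r ≤ r₀
      · exact le_add_of_le_of_nonneg (hM' r ⟨hr0, hcase⟩) (hψ r hr0)
      · push_neg at hcase
        have hr1 : 1 ≤ r := le_trans hr₀ hcase.le
        have hsub : ∀ c : ℝ, 0 < c → c ≤ m → K (c * r) ≤ M' + A * ψ (c * r) := by
          intro c hc hcm
          apply ih _ (by positivity)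
          calc c * r ≤ m * r := by nlinarith
            _ ≤ m * (r₀ * (1/m)^(n+1)) := by nlinarith
            _ = r₀ * (1/m)^n := by
                rw [pow_succ]; field_simp
        have hKp := hsub p hp (le_max_left _ _)
        have hKq := hsub q hq0 (le_max_right _ _)
        have h1 := hrec r hr1
        have h2 := habs r hcase
        linarith
  intro r hr0
  obtain ⟨n, hn⟩ := pow_unbounded_of_one_lt (r / r₀) h1m
  refine key n r hr0 ?_
  rw [div_lt_iff₀ hr₀0] at hn
  linarith [hn]

set_option maxHeartbeats 2000000 in
/-- the majorant estimate for the trie functional inequality. -/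
theorem majorant_transfer (p q α β C : ℝ) (hp : 0 < p) (hp1 : p < 1) (hq : q = 1 - p)
    (hβ : 0 ≤ β) (hC : 0 ≤ C) (K : ℝ → ℝ)
    (hKnonneg : ∀ r : ℝ, 0 < r → 0 ≤ K r)
    (hKbdd : ∃ M : ℝ, ∀ r ∈ Set.Ioc (0 : ℝ) 1, K r ≤ M)
    (hrec : ∀ r : ℝ, 1 ≤ r →
      K r ≤ K (p * r) + K (q * r) + C * (r ^ α * Real.log (1 + r) ^ β + 1)) :
    (α < 1 → K =O[atTop] fun r : ℝ => r) ∧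
    (α = 1 → K =O[atTop] fun r : ℝ => r * Real.log r ^ (β + 1)) ∧
    (1 < α → K =O[atTop] fun r : ℝ => r ^ α * Real.log r ^ β) := by
  have hq0 : 0 < q := by rw [hq]; linarith
  have hq1 : q < 1 := by rw [hq]; linarith
  have hpq1 : p + q = 1 := by rw [hq]; ring
  have hbdd := majorant_bddAux p q α β C hp hp1 hq0 hq1 hβ hC K hKbdd hrec
  refine ⟨?_, ?_, ?_⟩
  · -- CASE α < 1
    intro hα
    set γ : ℝ := (max α 0 + 1)/2 with hγdef
    have hmax0 : 0 ≤ max α 0 := le_max_right _ _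
    have hmax1 : max α 0 < 1 := max_lt hα one_pos
    have hγ0 : 0 < γ := by rw [hγdef]; linarith
    have hγ1 : γ < 1 := by rw [hγdef]; linarith
    have hαγ : α < γ := by
      have := le_max_left α 0
      rw [hγdef]; linarith
    set ε : ℝ := (γ - max α 0)/(β+1) with hεdef
    have hβ1 : (0:ℝ) < β + 1 := by linarith
    have hε0 : 0 < ε := div_pos (by rw [hγdef]; linarith) hβ1
    set C'' : ℝ := ((2:ℝ)^ε/ε)^β with hC''def
    have hC''0 : 0 ≤ C'' := Real.rpow_nonneg (by positivity) _
    have hlogb : ∀ r : ℝ, 1 ≤ r → r ^ α * Real.log (1+r) ^ β ≤ C'' * r ^ γ := by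
      intro r hr1
      have hr0 : 0 < r := lt_of_lt_of_le one_pos hr1
      have hL : Real.log (1+r) ≤ (2:ℝ)^ε/ε * r^ε := by
        have h1 : Real.log ((1+r)^ε) = ε * Real.log (1+r) := Real.log_rpow (by linarith) ε
        have h2 : Real.log ((1+r)^ε) ≤ (1+r)^ε :=
          Real.log_le_self (Real.rpow_nonneg (by linarith) _)
        have h3 : (1+r)^ε ≤ (2*r)^ε :=
          Real.rpow_le_rpow (by linarith) (by linarith) hε0.le
        have h4 : (2*r)^ε = 2^ε * r^ε := Real.mul_rpow (by norm_num) hr0.le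
        rw [h4] at h3
        rw [div_mul_eq_mul_div, le_div_iff₀ hε0, mul_comm]
        linarith
      have hLnn : 0 ≤ Real.log (1+r) := Real.log_nonneg (by linarith)
      have hLβ : Real.log (1+r) ^ β ≤ ((2:ℝ)^ε/ε)^β * r^(ε*β) := by
        have h5 : Real.log (1+r) ^ β ≤ ((2:ℝ)^ε/ε * r^ε) ^ β :=
          Real.rpow_le_rpow hLnn hL hβ
        have h6 : ((2:ℝ)^ε/ε * r^ε) ^ β = ((2:ℝ)^ε/ε)^β * (r^ε)^β :=
          Real.mul_rpow (by positivity) (Real.rpow_nonneg hr0.le _)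
        have h7 : (r^ε)^β = r^(ε*β) := (Real.rpow_mul hr0.le ε β).symm
        rw [h6, h7] at h5
        exact h5
      have hrα : r ^ α ≤ r ^ (max α 0) :=
        Real.rpow_le_rpow_of_exponent_le hr1 (le_max_left _ _)
      have hexp : max α 0 + ε*β ≤ γ := by
        have h8 : ε * (β+1) = γ - max α 0 := by
          rw [hεdef]; field_simp
        nlinarith [hε0.le]
      calc r ^ α * Real.log (1+r) ^ β
          ≤ r ^ (max α 0) * (((2:ℝ)^ε/ε)^β * r^(ε*β)) := by
            apply mul_le_mul hrα hLβ (Real.rpow_nonneg hLnn _) (Real.rpow_nonneg hr0.le _)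
        _ = C'' * r ^ (max α 0 + ε*β) := by
            rw [Real.rpow_add hr0, hC''def]; ring
        _ ≤ C'' * r ^ γ := by
            apply mul_le_mul_of_nonneg_left (Real.rpow_le_rpow_of_exponent_le hr1 hexp) hC''0
    set s : ℝ := p^γ + q^γ - 1 with hsdef
    have hs0 : 0 < s := by
      have h1 : p ^ (1:ℝ) < p ^ γ := Real.rpow_lt_rpow_of_exponent_gt hp hp1 hγ1
      have h2 : q ^ (1:ℝ) < q ^ γ := Real.rpow_lt_rpow_of_exponent_gt hq0 hq1 hγ1
      rw [Real.rpow_one] at h1 h2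
      rw [hsdef]; linarith
    set r₀ : ℝ := max 1 ((2/s)^(1/γ)) with hr₀def
    have hr₀1 : 1 ≤ r₀ := le_max_left _ _
    obtain ⟨M', hM'0, hM'⟩ := hbdd r₀
    set A : ℝ := 2*(C*C''+C+M')/s with hAdef
    have hA0 : 0 ≤ A := div_nonneg (by positivity) hs0.le
    have hAs : A * s = 2*(C*C''+C+M') := div_mul_cancel₀ _ hs0.ne'
    have hψnn : ∀ r : ℝ, 0 < r → (0:ℝ) ≤ r - r^γ + 1 := by
      intro r hr0
      rcases le_or_gt r 1 with h | h
      · have : r ^ γ ≤ 1 := Real.rpow_le_one hr0.le h hγ0.le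
        linarith
      · have h1 : r ^ γ ≤ r ^ (1:ℝ) := Real.rpow_le_rpow_of_exponent_le h.le hγ1.le
        rw [Real.rpow_one] at h1
        linarith
    have habs : ∀ r : ℝ, r₀ < r →
        A * ((p*r) - (p*r)^γ + 1) + A * ((q*r) - (q*r)^γ + 1)
          + C * (r ^ α * Real.log (1+r) ^ β + 1) + M' ≤ A * (r - r^γ + 1) := by
      intro r hr
      have hr1 : 1 ≤ r := lt_of_le_of_lt hr₀1 hr |>.le
      have hr0 : 0 < r := lt_of_lt_of_le one_pos hr1
      have hrγ1 : 1 ≤ r^γ := by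
        calc (1:ℝ) = (1:ℝ)^γ := (Real.one_rpow γ).symm
          _ ≤ r^γ := Real.rpow_le_rpow zero_le_one hr1 hγ0.le
      have hrγ2 : 2 ≤ s * r^γ := by
        have h1 : ((2/s)^(1/γ))^γ = 2/s := by
          rw [← Real.rpow_mul (by positivity : (0:ℝ) ≤ 2/s), one_div,
            inv_mul_cancel₀ hγ0.ne', Real.rpow_one]
        have h2 : 2/s ≤ r₀^γ := by
          rw [← h1]
          exact Real.rpow_le_rpow (Real.rpow_nonneg (by positivity) _) (le_max_right _ _) hγ0.le
        have h3 : r₀^γ ≤ r^γ := Real.rpow_le_rpow (by positivity) hr.le hγ0.le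
        have h4 := (div_le_iff₀ hs0).mp (h2.trans h3)
        linarith
      have hpγ : (p*r)^γ = p^γ * r^γ := Real.mul_rpow hp.le hr0.le
      have hqγ : (q*r)^γ = q^γ * r^γ := Real.mul_rpow hq0.le hr0.le
      have hg := hlogb r hr1
      have hCg : C * (r ^ α * Real.log (1+r) ^ β + 1) ≤ C*C''*r^γ + C := by
        have := mul_le_mul_of_nonneg_left hg hC
        nlinarith
      rw [hpγ, hqγ]
      have key : C*C''*r^γ + C + M' + A ≤ A * s * r^γ := by
        have h1 : A * 2 ≤ A * (s * r^γ) := mul_le_mul_of_nonneg_left hrγ2 hA0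
        have h4 : A*s*r^γ = 2*(C*C''*r^γ + C*r^γ + M'*r^γ) := by rw [hAs]; ring
        have h5 : C*1 ≤ C*r^γ := mul_le_mul_of_nonneg_left hrγ1 hC
        have h6 : M'*1 ≤ M'*r^γ := mul_le_mul_of_nonneg_left hrγ1 hM'0
        have h7 : A * (s * r^γ) = A*s*r^γ := by ring
        linarith
      have hexpand : A * (p*r - p^γ * r^γ + 1) + A * (q*r - q^γ * r^γ + 1)
          = A * r - A * (p^γ + q^γ) * r^γ + 2*A := by
        linear_combination A*r*hpq1
      have h7 : A*s*r^γ = A*(p^γ+q^γ)*r^γ - A*r^γ := by rw [hsdef]; ring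
      linarith [hCg, key, hexpand, h7]
    have hbound := majorant_keyAux p q α β C hp hq0 hp1 hq1 K (fun r => r - r^γ + 1) hrec
      r₀ A M' hr₀1 hM' (fun r hr => mul_nonneg hA0 (hψnn r hr)) habs
    rw [Asymptotics.isBigO_iff]
    refine ⟨M' + 2*A, ?_⟩
    filter_upwards [eventually_ge_atTop (1:ℝ)] with r hr1
    have hr0 : 0 < r := lt_of_lt_of_le one_pos hr1
    rw [Real.norm_of_nonneg (hKnonneg r hr0), Real.norm_of_nonneg (by linarith : (0:ℝ) ≤ r)]
    have h1 := hbound r hr0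
    have h2 : 0 ≤ r ^ γ := Real.rpow_nonneg hr0.le _
    linarith [mul_le_mul_of_nonneg_left hr1 hM'0, mul_le_mul_of_nonneg_left hr1 hA0,
      mul_nonneg hA0 h2]
  · -- CASE α = 1
    intro hα
    subst hα
    set m : ℝ := max p q with hmdef
    have hm0 : 0 < m := lt_of_lt_of_le hp (le_max_left _ _)
    have hm1 : m < 1 := max_lt hp1 hq1
    set δ : ℝ := Real.log (2/(1+m)) with hδdef
    have hδ0 : 0 < δ := Real.log_pos (by rw [lt_div_iff₀ (by linarith)]; linarith)
    have hδ2 : δ < Real.log 2 := by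
      apply Real.log_lt_log (by positivity)
      rw [div_lt_iff₀ (by linarith)]; nlinarith
    obtain ⟨M', hM'0, hM'⟩ := hbdd 1
    set c₀ : ℝ := Real.log 2 ^ β with hc₀def
    have hc₀ : 0 < c₀ := Real.rpow_pos_of_pos (Real.log_pos one_lt_two) β
    set A : ℝ := (C + (C + M') / c₀) / δ with hAdef
    have hA0 : 0 ≤ A := div_nonneg (by positivity) hδ0.le
    have hAδ : A * δ = C + (C + M') / c₀ := div_mul_cancel₀ _ hδ0.ne'
    have hlogshift : ∀ c : ℝ, 0 < c → c ≤ m → ∀ r : ℝ, 1 ≤ r →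
        Real.log (1 + c*r) ≤ Real.log (1+r) - δ := by
      intro c hc hcm r hr1
      have hr0 : 0 < r := lt_of_lt_of_le one_pos hr1
      have h1 : 1 + c*r ≤ (1+m)/2 * (1+r) := by nlinarith
      have h2 : Real.log (1+c*r) ≤ Real.log ((1+m)/2*(1+r)) :=
        Real.log_le_log (by positivity) h1
      have h3 : Real.log ((1+m)/2*(1+r)) = Real.log ((1+m)/2) + Real.log (1+r) :=
        Real.log_mul (by positivity) (by positivity)
      have h4 : Real.log ((1+m)/2) = -δ := by
        rw [hδdef, ← Real.log_inv, inv_div]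
      linarith
    have habs : ∀ r : ℝ, (1:ℝ) < r →
        A * ((p*r) * Real.log (1+p*r) ^ (β+1)) + A * ((q*r) * Real.log (1+q*r) ^ (β+1))
          + C * (r ^ (1:ℝ) * Real.log (1+r) ^ β + 1) + M'
          ≤ A * (r * Real.log (1+r) ^ (β+1)) := by
      intro r hr
      have hr1 : 1 ≤ r := hr.le
      have hr0 : 0 < r := by linarith
      set L : ℝ := Real.log (1+r) with hLdef
      have hL2 : Real.log 2 ≤ L := Real.log_le_log two_pos (by linarith)
      have hL0 : 0 < L := lt_of_lt_of_le (Real.log_pos one_lt_two) hL2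
      have hLδ : 0 < L - δ := by linarith
      have hc : ∀ c : ℝ, 0 < c → c ≤ m →
          (c*r) * Real.log (1+c*r) ^ (β+1) ≤ c * (r * (L^β * (L-δ))) := by
        intro c hc0 hcm
        have hlog := hlogshift c hc0 hcm r hr1
        have hcr0 : (0:ℝ) < c*r := by positivity
        have hlnn : 0 ≤ Real.log (1+c*r) := Real.log_nonneg (by nlinarith)
        have h1 : Real.log (1+c*r) ^ (β+1) ≤ (L-δ) ^ (β+1) :=
          Real.rpow_le_rpow hlnn (by linarith) (by linarith)
        have h2 : (L-δ) ^ (β+1) = (L-δ)^β * (L-δ) := by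
          rw [Real.rpow_add hLδ, Real.rpow_one]
        have h3 : (L-δ)^β ≤ L^β := Real.rpow_le_rpow (by linarith) (by linarith) hβ
        have h4 : (L-δ)^(β+1) ≤ L^β * (L-δ) := by
          rw [h2]; exact mul_le_mul_of_nonneg_right h3 hLδ.le
        calc (c*r) * Real.log (1+c*r) ^ (β+1) ≤ (c*r) * (L^β*(L-δ)) :=
              mul_le_mul_of_nonneg_left (h1.trans h4) hcr0.le
          _ = c * (r * (L^β * (L-δ))) := by ring
      have hcp := hc p hp (le_max_left _ _)
      have hcq := hc q hq0 (le_max_right _ _)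
      have hLL : L ^ (β+1) = L^β * L := by rw [Real.rpow_add hL0, Real.rpow_one]
      have hX : c₀ ≤ r * L^β := by
        have h1 : c₀ ≤ L^β := Real.rpow_le_rpow (Real.log_nonneg one_le_two) hL2 hβ
        calc c₀ ≤ L^β := h1
          _ = 1 * L^β := (one_mul _).symm
          _ ≤ r * L^β := mul_le_mul_of_nonneg_right hr1 (le_trans hc₀.le h1)
      have h5 : (C+M')/c₀ * c₀ ≤ (C+M')/c₀ * (r * L^β) :=
        mul_le_mul_of_nonneg_left hX (div_nonneg (by linarith) hc₀.le)
      have h6 : (C+M')/c₀ * c₀ = C + M' := div_mul_cancel₀ _ hc₀.ne'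
      have hr1' : r ^ (1:ℝ) = r := Real.rpow_one r
      rw [hr1', hLL]
      have hzero : A*δ - C - (C+M')/c₀ = 0 := by linarith [hAδ]
      calc A * ((p*r) * Real.log (1+p*r) ^ (β+1)) + A * ((q*r) * Real.log (1+q*r) ^ (β+1))
            + C*(r*L^β+1) + M'
          ≤ A * (p * (r * (L^β*(L-δ)))) + A * (q * (r * (L^β*(L-δ)))) + C*(r*L^β+1) + M' := by
            refine add_le_add (add_le_add (add_le_add ?_ ?_) le_rfl) le_rfl
            · exact mul_le_mul_of_nonneg_left hcp hA0
            · exact mul_le_mul_of_nonneg_left hcq hA0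
        _ = A * (r*(L^β*L)) - A*δ*(r*L^β) + C*(r*L^β) + (C+M') := by
            linear_combination (A*(r*(L^β*(L-δ)))) * hpq1
        _ ≤ A * (r*(L^β*L)) - A*δ*(r*L^β) + C*(r*L^β) + (C+M')/c₀*(r*L^β) := by
            linarith [h5, h6]
        _ = A * (r*(L^β*L)) - (A*δ - C - (C+M')/c₀)*(r*L^β) := by ring
        _ = A * (r*(L^β*L)) := by rw [hzero, zero_mul, sub_zero]
    have hψnn : ∀ r : ℝ, 0 < r → 0 ≤ A * (r * Real.log (1+r) ^ (β+1)) := by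
      intro r hr0
      exact mul_nonneg hA0 (mul_nonneg hr0.le
        (Real.rpow_nonneg (Real.log_nonneg (by linarith)) _))
    have hbound := majorant_keyAux p q 1 β C hp hq0 hp1 hq1 K
      (fun r => r * Real.log (1+r) ^ (β+1)) hrec 1 A M' le_rfl hM'
      (fun r hr => hψnn r hr) habs
    rw [Asymptotics.isBigO_iff]
    refine ⟨M' + A * 2^(β+1), ?_⟩
    filter_upwards [eventually_ge_atTop (3:ℝ)] with r hr3
    have hr1 : (1:ℝ) ≤ r := by linarith
    have hr0 : (0:ℝ) < r := by linarith
    have hlogr1 : 1 ≤ Real.log r := by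
      rw [Real.le_log_iff_exp_le hr0]
      have := Real.exp_one_lt_d9
      linarith
    have hlog2 : Real.log (1+r) ≤ 2 * Real.log r := by
      have h1 : Real.log (1+r) ≤ Real.log (r*r) :=
        Real.log_le_log (by linarith) (by nlinarith)
      rw [Real.log_mul hr0.ne' hr0.ne'] at h1
      linarith
    have h2 : Real.log (1+r) ^ (β+1) ≤ 2^(β+1) * Real.log r ^ (β+1) := by
      have ha : Real.log (1+r) ^ (β+1) ≤ (2 * Real.log r) ^ (β+1) :=
        Real.rpow_le_rpow (Real.log_nonneg (by linarith)) hlog2 (by linarith)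
      rwa [Real.mul_rpow (by norm_num) (by linarith)] at ha
    have ha1 : (1:ℝ) ≤ Real.log r ^ (β+1) := by
      calc (1:ℝ) = (1:ℝ)^(β+1) := (Real.one_rpow _).symm
        _ ≤ Real.log r ^ (β+1) := Real.rpow_le_rpow zero_le_one hlogr1 (by linarith)
    have hX1 : (1:ℝ) ≤ r * Real.log r ^ (β+1) := by nlinarith
    have h1 : K r ≤ M' + A * (r * Real.log (1+r) ^ (β+1)) := hbound r hr0
    have h3 : A * (r * Real.log (1+r)^(β+1)) ≤ A * (r * (2^(β+1) * Real.log r^(β+1))) := by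
      apply mul_le_mul_of_nonneg_left _ hA0
      exact mul_le_mul_of_nonneg_left h2 hr0.le
    have h4 : M' * 1 ≤ M' * (r * Real.log r ^ (β+1)) :=
      mul_le_mul_of_nonneg_left hX1 hM'0
    have h5 : A * (r * (2^(β+1) * Real.log r^(β+1))) = A*2^(β+1)*(r*Real.log r^(β+1)) := by
      ring
    rw [Real.norm_of_nonneg (hKnonneg r hr0), Real.norm_of_nonneg (by positivity)]
    linarith
  · -- CASE α > 1
    intro hα
    obtain ⟨M', hM'0, hM'⟩ := hbdd 1
    set θ : ℝ := p ^ α + q ^ α with hθdef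
    have hpα : p ^ α < p := by
      calc p ^ α < p ^ (1:ℝ) := Real.rpow_lt_rpow_of_exponent_gt hp hp1 hα
        _ = p := Real.rpow_one p
    have hqα : q ^ α < q := by
      calc q ^ α < q ^ (1:ℝ) := Real.rpow_lt_rpow_of_exponent_gt hq0 hq1 hα
        _ = q := Real.rpow_one q
    have hθ1 : θ < 1 := by rw [hθdef]; linarith
    have hθ0 : 0 ≤ θ := add_nonneg (Real.rpow_nonneg hp.le _) (Real.rpow_nonneg hq0.le _)
    set c₀ : ℝ := Real.log 2 ^ β with hc₀def
    have hc₀ : 0 < c₀ := Real.rpow_pos_of_pos (Real.log_pos one_lt_two) β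
    set A : ℝ := (C + (C + M') / c₀) / (1 - θ) with hAdef
    have hA0 : 0 ≤ A := div_nonneg (by positivity) (by linarith)
    have hAθ : A * (1 - θ) = C + (C + M') / c₀ := div_mul_cancel₀ _ (by linarith)
    have hψnn : ∀ r : ℝ, 0 < r → (0:ℝ) ≤ r ^ α * Real.log (1 + r) ^ β := fun r hr =>
      mul_nonneg (Real.rpow_nonneg hr.le _) (Real.rpow_nonneg (Real.log_nonneg (by linarith)) _)
    have habs : ∀ r : ℝ, (1:ℝ) < r →
        A * ((p*r) ^ α * Real.log (1+p*r) ^ β) + A * ((q*r) ^ α * Real.log (1+q*r) ^ β)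
          + C * (r ^ α * Real.log (1+r) ^ β + 1) + M'
          ≤ A * (r ^ α * Real.log (1+r) ^ β) := by
      intro r hr
      have hr0 : 0 < r := by linarith
      have hL0 : 0 ≤ Real.log (1 + r) := Real.log_nonneg (by linarith)
      have hψc : ∀ c : ℝ, 0 < c → c < 1 →
          (c*r) ^ α * Real.log (1 + c*r) ^ β ≤ c ^ α * (r ^ α * Real.log (1+r) ^ β) := by
        intro c hc hc1
        rw [Real.mul_rpow hc.le hr0.le, mul_assoc]
        refine mul_le_mul_of_nonneg_left (mul_le_mul_of_nonneg_left ?_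
          (Real.rpow_nonneg hr0.le _)) (Real.rpow_nonneg hc.le _)
        refine Real.rpow_le_rpow (Real.log_nonneg (by nlinarith)) ?_ hβ
        exact Real.log_le_log (by nlinarith) (by nlinarith)
      have hψp := hψc p hp hp1
      have hψq := hψc q hq0 hq1
      have hΨc : c₀ ≤ r ^ α * Real.log (1+r) ^ β := by
        have h1 : (1:ℝ) ≤ r ^ α := by
          calc (1:ℝ) = (1:ℝ) ^ α := (Real.one_rpow α).symm
            _ ≤ r ^ α := Real.rpow_le_rpow zero_le_one hr.le (by linarith)
        have h2 : c₀ ≤ Real.log (1 + r) ^ β := by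
          refine Real.rpow_le_rpow (Real.log_nonneg one_le_two) ?_ hβ
          exact Real.log_le_log two_pos (by linarith)
        calc c₀ ≤ Real.log (1+r) ^ β := h2
          _ = 1 * Real.log (1+r) ^ β := (one_mul _).symm
          _ ≤ r ^ α * Real.log (1+r) ^ β := mul_le_mul_of_nonneg_right h1 (le_trans hc₀.le h2)
      have hΨ0 : 0 ≤ r ^ α * Real.log (1+r) ^ β := hψnn r hr0
      have h5 : (C + M') / c₀ * c₀ ≤ (C + M') / c₀ * (r ^ α * Real.log (1+r) ^ β) :=
        mul_le_mul_of_nonneg_left hΨc (div_nonneg (by linarith) hc₀.le)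
      have h6 : (C + M') / c₀ * c₀ = C + M' := div_mul_cancel₀ _ hc₀.ne'
      have hAeq : A * θ + C + (C + M') / c₀ = A := by linear_combination -hAθ
      calc A * ((p*r) ^ α * Real.log (1+p*r) ^ β) + A * ((q*r) ^ α * Real.log (1+q*r) ^ β)
            + C * (r ^ α * Real.log (1+r) ^ β + 1) + M'
          ≤ A * (p ^ α * (r ^ α * Real.log (1+r) ^ β)) + A * (q ^ α * (r ^ α * Real.log (1+r) ^ β))
            + C * ((r ^ α * Real.log (1+r) ^ β) + 1) + M' := by
            refine add_le_add (add_le_add (add_le_add ?_ ?_) le_rfl) le_rfl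
            · exact mul_le_mul_of_nonneg_left hψp hA0
            · exact mul_le_mul_of_nonneg_left hψq hA0
        _ = A * θ * (r ^ α * Real.log (1+r) ^ β) + C * (r ^ α * Real.log (1+r) ^ β) + (C + M') := by
            rw [hθdef]; ring
        _ ≤ A * θ * (r ^ α * Real.log (1+r) ^ β) + C * (r ^ α * Real.log (1+r) ^ β)
            + ((C + M') / c₀ * (r ^ α * Real.log (1+r) ^ β)) := by linarith [h5, h6]
        _ = (A * θ + C + (C + M') / c₀) * (r ^ α * Real.log (1+r) ^ β) := by ring
        _ = A * (r ^ α * Real.log (1+r) ^ β) := by rw [hAeq]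
    have hbound := majorant_keyAux p q α β C hp hq0 hp1 hq1 K
      (fun r => r ^ α * Real.log (1+r) ^ β) hrec 1 A M' le_rfl hM'
      (fun r hr => mul_nonneg hA0 (hψnn r hr)) habs
    rw [Asymptotics.isBigO_iff]
    refine ⟨M' + A * 2^β, ?_⟩
    filter_upwards [eventually_ge_atTop (3:ℝ)] with r hr3
    have hr1 : (1:ℝ) ≤ r := by linarith
    have hr0 : (0:ℝ) < r := by linarith
    have hlogr1 : 1 ≤ Real.log r := by
      rw [Real.le_log_iff_exp_le hr0]
      have := Real.exp_one_lt_d9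
      linarith
    have hlog2 : Real.log (1+r) ≤ 2 * Real.log r := by
      have h1 : Real.log (1+r) ≤ Real.log (r*r) :=
        Real.log_le_log (by linarith) (by nlinarith)
      rw [Real.log_mul hr0.ne' hr0.ne'] at h1
      linarith
    have h2 : Real.log (1+r) ^ β ≤ 2^β * Real.log r ^ β := by
      have ha : Real.log (1+r) ^ β ≤ (2 * Real.log r) ^ β :=
        Real.rpow_le_rpow (Real.log_nonneg (by linarith)) hlog2 hβ
      rwa [Real.mul_rpow (by norm_num) (by linarith)] at ha
    have ha1 : (1:ℝ) ≤ Real.log r ^ β := by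
      calc (1:ℝ) = (1:ℝ)^β := (Real.one_rpow _).symm
        _ ≤ Real.log r ^ β := Real.rpow_le_rpow zero_le_one hlogr1 hβ
    have hrα1 : (1:ℝ) ≤ r ^ α := by
      calc (1:ℝ) = (1:ℝ) ^ α := (Real.one_rpow α).symm
        _ ≤ r ^ α := Real.rpow_le_rpow zero_le_one hr1 (by linarith)
    have hX1 : (1:ℝ) ≤ r ^ α * Real.log r ^ β := by nlinarith
    have h1 : K r ≤ M' + A * (r ^ α * Real.log (1+r) ^ β) := hbound r hr0
    have h3 : A * (r ^ α * Real.log (1+r)^β) ≤ A * (r ^ α * (2^β * Real.log r^β)) := by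
      apply mul_le_mul_of_nonneg_left _ hA0
      exact mul_le_mul_of_nonneg_left h2 (Real.rpow_nonneg hr0.le _)
    have h4 : M' * 1 ≤ M' * (r ^ α * Real.log r ^ β) := mul_le_mul_of_nonneg_left hX1 hM'0
    have h5 : A * (r ^ α * (2^β * Real.log r^β)) = A*2^β*(r ^ α*Real.log r^β) := by ring
    have hnn : (0:ℝ) ≤ r ^ α * Real.log r ^ β :=
      mul_nonneg (Real.rpow_nonneg hr0.le _) (Real.rpow_nonneg (by linarith) _)
    rw [Real.norm_of_nonneg (hKnonneg r hr0), Real.norm_of_nonneg hnn]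
    linarith

end
end

section
/- The real-number identity ∑_{j≥1} 1/(2^j + 1) = ∑_{j≥1} (−1)^{j−1}/(2^j − 1) holds, where both series converge absolutely. -/
noncomputable section

private lemma half_pow_pos (n : ℕ) : (0:ℝ) < (2:ℝ)⁻¹ ^ n := by positivity

private lemma half_pow_lt_one (n : ℕ) : (2:ℝ)⁻¹ ^ (n+1) < 1 := by
  have : (2:ℝ)⁻¹ ^ (n+1) ≤ (2:ℝ)⁻¹ ^ 1 :=
    pow_le_pow_of_le_one (by norm_num) (by norm_num) (by omega)
  linarith [this]

/-- the double-indexed function -/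
private def F (p : ℕ × ℕ) : ℝ := (-1:ℝ)^p.2 * (2:ℝ)⁻¹ ^ ((p.1+1)*(p.2+1))

private lemma summable_F : Summable F := by
  rw [← summable_norm_iff]
  have hg : Summable (fun p : ℕ × ℕ => ((2:ℝ)⁻¹ ^ p.1 * (2:ℝ)⁻¹ ^ p.2)) :=
    (summable_geometric_of_lt_one (by norm_num) (by norm_num)).mul_of_nonneg
      (summable_geometric_of_lt_one (by norm_num) (by norm_num))
      (fun n => by positivity) (fun n => by positivity)
  apply Summable.of_nonneg_of_le (fun p => norm_nonneg _) _ (hg.mul_left (2:ℝ)⁻¹)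
  rintro ⟨j, k⟩
  have h1 : ‖F (j,k)‖ = (2:ℝ)⁻¹ ^ ((j+1)*(k+1)) := by
    simp [F, norm_mul, abs_pow, abs_of_nonneg, le_of_lt (half_pow_pos ((j+1)*(k+1)))]
  rw [h1]
  have h2 : (2:ℝ)⁻¹ ^ ((j+1)*(k+1)) ≤ (2:ℝ)⁻¹ ^ (j+k+1) :=
    pow_le_pow_of_le_one (by norm_num) (by norm_num) (by nlinarith)
  calc (2:ℝ)⁻¹ ^ ((j+1)*(k+1)) ≤ (2:ℝ)⁻¹ ^ (j+k+1) := h2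
    _ = 2⁻¹ * ((2:ℝ)⁻¹ ^ j * (2:ℝ)⁻¹ ^ k) := by ring

private lemma row_sum (j : ℕ) : ∑' k, F (j, k) = 1 / (2 ^ (j+1) + 1) := by
  set x : ℝ := (2:ℝ)⁻¹ ^ (j+1) with hx
  have hx0 : 0 < x := half_pow_pos _
  have hF : ∀ k, F (j, k) = (-x)^k * x := by
    intro k
    show (-1:ℝ)^k * (2:ℝ)⁻¹ ^ ((j+1)*(k+1)) = (-x)^k * x
    have hxp : (2:ℝ)⁻¹ ^ ((j+1)*(k+1)) = x^(k+1) := by rw [hx, pow_mul]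
    rw [hxp, neg_pow x k]
    ring
  rw [tsum_congr hF, tsum_mul_right, tsum_geometric_of_norm_lt_one (ξ := -x) (by
    rw [norm_neg, Real.norm_eq_abs, abs_of_pos hx0]; exact half_pow_lt_one j)]
  have h2 : (2:ℝ)^(j+1) * x = 1 := by
    rw [hx, ← mul_pow]; norm_num
  have h2pos : (0:ℝ) < 2^(j+1) := by positivity
  rw [sub_neg_eq_add]
  have hne1 : (1:ℝ) + x ≠ 0 := by positivity
  have hne2 : (2:ℝ)^(j+1) + 1 ≠ 0 := by positivity
  field_simp
  nlinarith [h2]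

private lemma col_sum (k : ℕ) : ∑' j, F (j, k) = (-1:ℝ)^k / (2 ^ (k+1) - 1) := by
  set y : ℝ := (2:ℝ)⁻¹ ^ (k+1) with hy
  have hy0 : 0 < y := half_pow_pos _
  have hy1 : y < 1 := half_pow_lt_one k
  have hF : ∀ j, F (j, k) = (-1:ℝ)^k * y * y^j := by
    intro j
    show (-1:ℝ)^k * (2:ℝ)⁻¹ ^ ((j+1)*(k+1)) = (-1:ℝ)^k * y * y^j
    rw [mul_comm (j+1) (k+1), pow_mul]
    ring
  rw [tsum_congr hF, tsum_mul_left, tsum_geometric_of_lt_one (le_of_lt hy0) hy1]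
  have h2 : (2:ℝ)^(k+1) * y = 1 := by
    rw [hy, ← mul_pow]; norm_num
  have hden : (0:ℝ) < (2:ℝ)^(k+1) - 1 := by
    have h1 : (1:ℝ) ≤ 2^k := one_le_pow₀ (by norm_num)
    have hs : (2:ℝ)^(k+1) = 2^k * 2 := pow_succ 2 k
    nlinarith
  have key : y * (1 - y)⁻¹ = ((2:ℝ)^(k+1) - 1)⁻¹ := by
    have hne1 : (1:ℝ) - y ≠ 0 := by linarith
    have hne2 : (2:ℝ)^(k+1) - 1 ≠ 0 := ne_of_gt hden
    field_simp
    nlinarith [h2]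
  rw [mul_assoc, key, div_eq_mul_inv]

/-- the identity `∑_{j≥1} 1/(2^j + 1) = ∑_{j≥1} (−1)^{j−1}/(2^j − 1)`
(both sums reindexed by `j = m + 1`). -/
theorem trie_size_identity' :
    Summable (fun m : ℕ => |(1 : ℝ) / (2 ^ (m + 1) + 1)|) ∧
    Summable (fun m : ℕ => |(-1 : ℝ) ^ m / (2 ^ (m + 1) - 1)|) ∧
    ∑' m : ℕ, (1 : ℝ) / (2 ^ (m + 1) + 1) = ∑' m : ℕ, (-1 : ℝ) ^ m / (2 ^ (m + 1) - 1) := by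
  have hgeo : Summable (fun m : ℕ => ((2:ℝ)⁻¹)^m) :=
    summable_geometric_of_lt_one (by norm_num) (by norm_num)
  have hb : ∀ m : ℕ, (1:ℝ) ≤ 2^m := fun m => one_le_pow₀ (by norm_num)
  have hs : ∀ m : ℕ, (2:ℝ)^(m+1) = 2^m * 2 := fun m => pow_succ 2 m
  have hpm : ∀ m : ℕ, (0:ℝ) < 2^m := fun m => by positivity
  refine ⟨?_, ?_, ?_⟩
  · apply Summable.of_nonneg_of_le (fun m => abs_nonneg _) _ hgeo
    intro m
    rw [abs_of_pos (by positivity), inv_pow, ← one_div]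
    exact one_div_le_one_div_of_le (hpm m) (by nlinarith [hs m, hpm m])
  · apply Summable.of_nonneg_of_le (fun m => abs_nonneg _) _ hgeo
    intro m
    have hden : (0:ℝ) < 2^(m+1) - 1 := by nlinarith [hs m, hb m]
    rw [abs_div, abs_pow, abs_neg, abs_one, one_pow, abs_of_pos hden, inv_pow, ← one_div]
    exact one_div_le_one_div_of_le (hpm m) (by nlinarith [hs m, hb m])
  · calc ∑' m : ℕ, (1 : ℝ) / (2 ^ (m + 1) + 1)
        = ∑' (j) (k), F (j, k) := tsum_congr (fun j => (row_sum j).symm)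
      _ = ∑' (k) (j), F (j, k) := (Summable.tsum_comm (f := fun j k => F (j,k)) summable_F).symm
      _ = ∑' m : ℕ, (-1 : ℝ) ^ m / (2 ^ (m + 1) - 1) := tsum_congr col_sum

end
end

section
/- For every real number b > 1, the identity ∑_{k≥1} (−1)^k·(k² − k − 1)/(k·(b^k − 1)) = ∑_{k≥1} (1/(b^k + 1)² + log(1 + b^{−k})) holds, where both series converge absolutely. -/
noncomputable section

/-- for every `b > 1`,
`∑_{k≥1} (−1)^k (k²−k−1)/(k(b^k−1)) = ∑_{k≥1} (1/(b^k+1)² + log(1+b^{−k}))`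
(both sums reindexed by `k = m + 1`). -/
theorem radix_sort_identity (b : ℝ) (hb : 1 < b) :
    Summable (fun m : ℕ => |(-1 : ℝ) ^ (m + 1) * (((m : ℝ) + 1) ^ 2 - ((m : ℝ) + 1) - 1) /
      (((m : ℝ) + 1) * (b ^ (m + 1) - 1))|) ∧
    Summable (fun m : ℕ =>
      |1 / (b ^ (m + 1) + 1) ^ 2 + Real.log (1 + (b ^ (m + 1))⁻¹)|) ∧
    ∑' m : ℕ, (-1 : ℝ) ^ (m + 1) * (((m : ℝ) + 1) ^ 2 - ((m : ℝ) + 1) - 1) /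
        (((m : ℝ) + 1) * (b ^ (m + 1) - 1)) =
      ∑' m : ℕ, (1 / (b ^ (m + 1) + 1) ^ 2 + Real.log (1 + (b ^ (m + 1))⁻¹)) := by
  have hb0 : (0 : ℝ) < b := lt_trans one_pos hb
  set x : ℝ := b⁻¹ with hxdef
  have hx0 : 0 < x := inv_pos.mpr hb0
  have hx1 : x < 1 := by
    rw [hxdef, inv_lt_one_iff₀]; right; exact hb
  set F : ℕ × ℕ → ℝ := fun p =>
    (-1 : ℝ) ^ (p.1 + 1) * (((p.1 : ℝ) + 1) ^ 2 - ((p.1 : ℝ) + 1) - 1) / ((p.1 : ℝ) + 1) *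
      x ^ ((p.1 + 1) * (p.2 + 1)) with hFdef
  -- rows
  have hrow : ∀ m : ℕ, HasSum (fun n => F (m, n))
      ((-1 : ℝ) ^ (m + 1) * (((m : ℝ) + 1) ^ 2 - ((m : ℝ) + 1) - 1) /
        (((m : ℝ) + 1) * (b ^ (m + 1) - 1))) := by
    intro m
    have hB : 1 < b ^ (m + 1) := one_lt_pow₀ hb m.succ_ne_zero
    set y : ℝ := x ^ (m + 1) with hy
    have hyB : y = (b ^ (m + 1))⁻¹ := by rw [hy, hxdef, inv_pow]
    have hy0 : 0 ≤ y := pow_nonneg hx0.le _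
    have hy1 : y < 1 := pow_lt_one₀ hx0.le hx1 m.succ_ne_zero
    set c : ℝ := (-1 : ℝ) ^ (m + 1) * (((m : ℝ) + 1) ^ 2 - ((m : ℝ) + 1) - 1) / ((m : ℝ) + 1)
      with hc
    have hg : HasSum (fun n : ℕ => c * y ^ (n + 1)) (c * (y * (1 - y)⁻¹)) := by
      have := ((hasSum_geometric_of_lt_one hy0 hy1).mul_left y).mul_left c
      refine this.congr_fun fun n => ?_
      rw [pow_succ']
    have hfun : (fun n : ℕ => F (m, n)) = fun n : ℕ => c * y ^ (n + 1) := by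
      funext n
      rw [hFdef, hc, hy, ← pow_mul]
    rw [hfun]
    convert hg using 1
    have hBne : b ^ (m + 1) - 1 ≠ 0 := sub_ne_zero.mpr (ne_of_gt hB)
    have hone : (1 : ℝ) - y ≠ 0 := sub_ne_zero.mpr hy1.ne'
    have hBpos : (0 : ℝ) < b ^ (m + 1) := pow_pos hb0 _
    rw [hc, hyB]
    field_simp
    try ring
  -- columns
  have hcol : ∀ n : ℕ, HasSum (fun m => F (m, n))
      (1 / (b ^ (n + 1) + 1) ^ 2 + Real.log (1 + (b ^ (n + 1))⁻¹)) := by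
    intro n
    have hB : 1 < b ^ (n + 1) := one_lt_pow₀ hb n.succ_ne_zero
    have hBpos : (0 : ℝ) < b ^ (n + 1) := pow_pos hb0 _
    set y : ℝ := x ^ (n + 1) with hy
    have hyB : y = (b ^ (n + 1))⁻¹ := by rw [hy, hxdef, inv_pow]
    have hy0 : 0 < y := pow_pos hx0 _
    have hy1 : y < 1 := pow_lt_one₀ hx0.le hx1 n.succ_ne_zero
    set t : ℝ := -y with ht
    have htn : ‖t‖ < 1 := by
      rw [ht, norm_neg, Real.norm_eq_abs, abs_of_pos hy0]; exact hy1
    have hta : |t| < 1 := by rwa [← Real.norm_eq_abs]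
    have h1 : HasSum (fun m : ℕ => t * ((m : ℝ) * t ^ m)) (t * (t / (1 - t) ^ 2)) :=
      (hasSum_coe_mul_geometric_of_norm_lt_one htn).mul_left t
    have h2 : HasSum (fun m : ℕ => -(t ^ (m + 1) / ((m : ℝ) + 1))) (Real.log (1 - t)) := by
      simpa using (Real.hasSum_pow_div_log_of_abs_lt_one hta).neg
    have h3 := h1.add h2
    have hfun : (fun m : ℕ => F (m, n)) =
        fun m : ℕ => t * ((m : ℝ) * t ^ m) + -(t ^ (m + 1) / ((m : ℝ) + 1)) := by
      funext m
      have hm1 : ((m : ℝ) + 1) ≠ 0 := by positivity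
      have htp : t ^ (m + 1) = (-1 : ℝ) ^ (m + 1) * y ^ (m + 1) := by
        rw [ht, neg_pow]
      rw [hFdef]
      simp only
      rw [mul_comm ((m : ℝ)) (t ^ m), ← mul_assoc, mul_comm t (t ^ m), ← pow_succ, htp,
        show (m + 1) * (n + 1) = (n + 1) * (m + 1) by ring, pow_mul, ← hy]
      field_simp
      ring
    have hsq : ∀ B : ℝ, 0 < B → -B⁻¹ * (-B⁻¹ / (1 - -B⁻¹) ^ 2) = 1 / (B + 1) ^ 2 := by
      intro B hB
      have h1 : B + 1 ≠ 0 := by positivity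
      have h2 : B ≠ 0 := ne_of_gt hB
      field_simp
      try ring
      have h3 : (1 + B * 2 + B ^ 2) ≠ 0 := by positivity
      rw [show B * (1 + B * 2 + B ^ 2)⁻¹ * 2 + B ^ 2 * (1 + B * 2 + B ^ 2)⁻¹ + (1 + B * 2 + B ^ 2)⁻¹
        = (1 + B * 2 + B ^ 2) * (1 + B * 2 + B ^ 2)⁻¹ by ring]
      exact mul_inv_cancel₀ h3
    have e1 : t * (t / (1 - t) ^ 2) = 1 / (b ^ (n + 1) + 1) ^ 2 := by
      rw [ht, hyB]; exact hsq _ hBpos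
    have e2 : Real.log (1 - t) = Real.log (1 + (b ^ (n + 1))⁻¹) := by
      rw [ht, hyB, sub_neg_eq_add]
    rw [hfun, ← e1, ← e2]
    exact h3
  -- absolute summability of the double series
  have habsF : Summable (fun p : ℕ × ℕ => |F p|) := by
    have hgeo : Summable (fun n : ℕ => x ^ n) := summable_geometric_of_lt_one hx0.le hx1
    have h1 : Summable (fun m : ℕ => ((m : ℝ) + 1) * x ^ (m + 1)) := by
      have ha : Summable (fun m : ℕ => (m : ℝ) * x ^ m) :=
        (hasSum_coe_mul_geometric_of_norm_lt_one
          (by rw [Real.norm_eq_abs, abs_of_pos hx0]; exact hx1)).summable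
      refine ((ha.add hgeo).mul_left x).congr fun m => ?_
      rw [pow_succ']
      ring
    have hdom : Summable (fun p : ℕ × ℕ => (((p.1 : ℝ) + 1) * x ^ (p.1 + 1)) * x ^ p.2) :=
      h1.mul_of_nonneg hgeo (fun m => by positivity) (fun n => by positivity)
    refine Summable.of_nonneg_of_le (fun p => abs_nonneg _) (fun p => ?_) hdom
    obtain ⟨m, n⟩ := p
    have hm1 : (0 : ℝ) < (m : ℝ) + 1 := by positivity
    have hxe : (0 : ℝ) ≤ x ^ ((m + 1) * (n + 1)) := by positivity
    have hcoef : |(-1 : ℝ) ^ (m + 1) * (((m : ℝ) + 1) ^ 2 - ((m : ℝ) + 1) - 1) / ((m : ℝ) + 1)|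
        ≤ (m : ℝ) + 1 := by
      rw [abs_div, abs_mul, abs_pow, abs_neg, abs_one, one_pow, one_mul,
        abs_of_pos hm1, div_le_iff₀ hm1]
      rw [abs_le]
      constructor <;> nlinarith [sq_nonneg ((m : ℝ))]
    have hexp : x ^ ((m + 1) * (n + 1)) ≤ x ^ (m + 1) * x ^ n := by
      rw [← pow_add]
      refine pow_le_pow_of_le_one hx0.le hx1.le ?_
      nlinarith [Nat.zero_le (m * n)]
    calc |F (m, n)| = |(-1 : ℝ) ^ (m + 1) * (((m : ℝ) + 1) ^ 2 - ((m : ℝ) + 1) - 1) /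
          ((m : ℝ) + 1)| * x ^ ((m + 1) * (n + 1)) := by
          rw [hFdef, abs_mul, abs_of_nonneg hxe]
      _ ≤ (((m : ℝ) + 1)) * (x ^ (m + 1) * x ^ n) :=
          mul_le_mul hcoef hexp hxe hm1.le
      _ = (((m : ℝ) + 1) * x ^ (m + 1)) * x ^ n := by ring
  have hFsum : Summable F := habsF.of_abs
  refine ⟨?_, ?_, ?_⟩
  · -- first summability
    have hsum1 : Summable (fun m : ℕ => ∑' n, |F (m, n)|) :=
      ((summable_prod_of_nonneg (fun p => abs_nonneg _)).mp habsF).2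
    refine hsum1.of_nonneg_of_le (fun m => abs_nonneg _) (fun m => ?_)
    rw [← (hrow m).tsum_eq]
    simpa using norm_tsum_le_tsum_norm (f := fun n => F (m, n)) (habsF.prod_factor m)
  · -- second summability
    have hswap : Summable (fun p : ℕ × ℕ => |F p.swap|) := habsF.prod_symm
    have hsum2 : Summable (fun n : ℕ => ∑' m, |F (m, n)|) :=
      ((summable_prod_of_nonneg (f := fun p : ℕ × ℕ => |F p.swap|)
        (fun p => abs_nonneg _)).mp hswap).2
    refine hsum2.of_nonneg_of_le (fun n => abs_nonneg _) (fun n => ?_)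
    rw [← (hcol n).tsum_eq]
    simpa using norm_tsum_le_tsum_norm (f := fun m => F (m, n)) (hswap.prod_factor n)
  · -- the identity
    calc ∑' m : ℕ, (-1 : ℝ) ^ (m + 1) * (((m : ℝ) + 1) ^ 2 - ((m : ℝ) + 1) - 1) /
          (((m : ℝ) + 1) * (b ^ (m + 1) - 1))
        = ∑' m : ℕ, ∑' n : ℕ, F (m, n) := tsum_congr fun m => ((hrow m).tsum_eq).symm
      _ = ∑' p : ℕ × ℕ, F p := (Summable.tsum_prod hFsum).symm
      _ = ∑' n : ℕ, ∑' m : ℕ, F (m, n) := by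
          rw [Summable.tsum_prod hFsum]
          exact (Summable.tsum_comm (f := fun m n => F (m, n)) hFsum).symm
      _ = ∑' m : ℕ, (1 / (b ^ (m + 1) + 1) ^ 2 + Real.log (1 + (b ^ (m + 1))⁻¹)) :=
          tsum_congr fun n => (hcol n).tsum_eq

end
end

section
/- Let μ : ℕ → ℝ satisfy μ₀ = μ₁ = 0 and, for all n ≥ 2, (1 − 2^{1−n})·μ_n = n + 2^{−n}·∑_{k=1}^{n−1} C(n,k)·μ_k (the recurrence satisfied by the expected total number of coin flips in the fair-coin leader election procedure starting with n contenders). Then μ_n = 2n for all n ≥ 2. -/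
noncomputable section

open Finset

lemma sum_k_choose (m : ℕ) :
    ∑ k ∈ range (m + 2), k * (m + 1).choose k = (m + 1) * 2 ^ m := by
  rw [Finset.sum_range_succ']
  calc ∑ k ∈ range (m + 1), (k + 1) * (m + 1).choose (k + 1) + 0 * (m + 1).choose 0
      = ∑ k ∈ range (m + 1), (m + 1) * m.choose k := by
        rw [Nat.zero_mul, add_zero]
        refine Finset.sum_congr rfl fun k _ => ?_
        rw [mul_comm, ← Nat.add_one_mul_choose_eq, mul_comm]
    _ = (m + 1) * 2 ^ m := by rw [← Finset.mul_sum, Nat.sum_range_choose]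

lemma sum_Ioo_k_choose (n : ℕ) (hn : 2 ≤ n) :
    ∑ k ∈ Finset.Ioo 0 n, (k : ℝ) * n.choose k = n * 2 ^ (n - 1) - n := by
  obtain ⟨m, rfl⟩ : ∃ m, n = m + 2 := ⟨n - 2, by omega⟩
  have keyN : ∑ k ∈ range (m + 3), k * (m + 2).choose k = (m + 2) * 2 ^ (m + 1) :=
    sum_k_choose (m + 1)
  have key : ∑ k ∈ range (m + 3), (k : ℝ) * (m + 2).choose k = (m + 2 : ℝ) * 2 ^ (m + 1) := by
    exact_mod_cast congrArg (Nat.cast : ℕ → ℝ) keyN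
  have e1 : range (m + 3) = insert (m + 2) (insert 0 (Finset.Ioo 0 (m + 2))) := by
    ext x; simp; omega
  rw [e1, Finset.sum_insert (by simp), Finset.sum_insert (by simp)] at key
  simp only [Nat.cast_zero, zero_mul, zero_add, Nat.choose_self, Nat.cast_one, mul_one] at key
  have hexp : m + 2 - 1 = m + 1 := by omega
  rw [hexp]
  push_cast at key ⊢
  linarith

/-- the expected total number of coin flips in the fair-coin leader
election procedure with `n ≥ 2` contenders is exactly `2n`. -/
theorem leader_election_mean (μ : ℕ → ℝ) (hμ0 : μ 0 = 0) (hμ1 : μ 1 = 0)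
    (hrec : ∀ n : ℕ, 2 ≤ n →
      (1 - 2 * ((2 : ℝ) ^ n)⁻¹) * μ n =
        (n : ℝ) + ((2 : ℝ) ^ n)⁻¹ * ∑ k ∈ Finset.Ioo 0 n, (n.choose k : ℝ) * μ k) :
    ∀ n : ℕ, 2 ≤ n → μ n = 2 * n := by
  intro n
  induction n using Nat.strong_induction_on with
  | _ n IH =>
  intro hn
  have hrecn := hrec n hn
  have hsum : ∑ k ∈ Finset.Ioo 0 n, (n.choose k : ℝ) * μ k
      = ∑ k ∈ Finset.Ioo 0 n, (n.choose k : ℝ) * (if k = 1 then (0:ℝ) else 2 * k) := by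
    refine Finset.sum_congr rfl fun k hk => ?_
    simp only [Finset.mem_Ioo] at hk
    by_cases h1 : k = 1
    · simp [h1, hμ1]
    · have h2 : 2 ≤ k := by omega
      rw [IH k hk.2 h2, if_neg h1]
  have hsum2 : ∑ k ∈ Finset.Ioo 0 n, (n.choose k : ℝ) * (if k = 1 then (0:ℝ) else 2 * k)
      = (∑ k ∈ Finset.Ioo 0 n, (n.choose k : ℝ) * (2 * k)) - 2 * n := by
    have h1mem : 1 ∈ Finset.Ioo 0 n := by simp; omega
    rw [← Finset.add_sum_erase _ _ h1mem,
      ← Finset.add_sum_erase _ (fun k => (n.choose k : ℝ) * (2 * (k:ℝ))) h1mem]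
    rw [if_pos rfl, mul_zero, zero_add]
    have : ∑ k ∈ (Finset.Ioo 0 n).erase 1, (n.choose k : ℝ) * (if k = 1 then (0:ℝ) else 2 * k)
        = ∑ k ∈ (Finset.Ioo 0 n).erase 1, (n.choose k : ℝ) * (2 * k) := by
      refine Finset.sum_congr rfl fun k hk => ?_
      rw [if_neg (Finset.ne_of_mem_erase hk)]
    rw [this, Nat.choose_one_right]
    push_cast
    ring
  have hsum3 : ∑ k ∈ Finset.Ioo 0 n, (n.choose k : ℝ) * (2 * k)
      = 2 * ((n : ℝ) * 2 ^ (n - 1) - n) := by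
    rw [← sum_Ioo_k_choose n hn, Finset.mul_sum]
    refine Finset.sum_congr rfl fun k _ => ?_
    ring
  rw [hsum, hsum2, hsum3] at hrecn
  have hp : (2:ℝ) ^ n ≠ 0 := by positivity
  have hexp : (2:ℝ) ^ n = 2 * 2 ^ (n - 1) := by
    rw [← pow_succ']
    congr 1
    omega
  have hne : (1 : ℝ) - 2 * ((2:ℝ) ^ n)⁻¹ ≠ 0 := by
    have h4 : (4:ℝ) ≤ 2 ^ n := by
      calc (4:ℝ) = 2 ^ 2 := by norm_num
      _ ≤ 2 ^ n := by exact pow_le_pow_right₀ (by norm_num) hn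
    have : 2 * ((2:ℝ) ^ n)⁻¹ < 1 := by
      rw [mul_inv_lt_iff₀ (by positivity)]
      linarith
    linarith
  have hRHS : (n : ℝ) + ((2:ℝ) ^ n)⁻¹ * (2 * ((n : ℝ) * 2 ^ (n - 1) - n) - 2 * n)
      = 2 * n * (1 - 2 * ((2:ℝ) ^ n)⁻¹) := by
    field_simp
    rw [hexp]
    ring
  rw [hRHS] at hrecn
  exact mul_right_cancel₀ hne
    (by linarith [hrecn] : (μ n) * (1 - 2 * ((2:ℝ)^n)⁻¹) = 2 * n * (1 - 2 * ((2:ℝ)^n)⁻¹))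

end
end
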